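/- arXiv:1612.07373 — 7 statements merged into one kernel-verified Lean document; each statement's English description precedes it below -/
import Mathlib

section
/- For every r ∈ ℝ one has B(S(r)) = ∫_0^r τ S'(τ) dτ, where S' denotes the derivative of S (which exists at almost every point since S is Lipschitz continuous, and the function τ ↦ τ S'(τ) is integrable on the interval with endpoints 0 and r). -/
open MeasureTheory
open scoped Classical

/-- Pseudo-inverse of a non-decreasing function `S`. -/
noncomputable def pseudoInv (S : ℝ → ℝ) (q : ℝ) : ℝ :=
  if S 0 < q then sInf {z : ℝ | S z = q}
  else if q = S 0 then 0
  else sSup {z : ℝ | S z = q}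

/-- The extended-real-valued function `B` associated with `S`. -/
noncomputable def Bfun (S : ℝ → ℝ) (q : ℝ) : EReal :=
  if q ∈ Set.range S then ((∫ τ in (S 0)..q, pseudoInv S τ) : ℝ) else ⊤

open Set ENNReal
open scoped NNReal

namespace BfunAux


/-- `S` as a Stieltjes function. -/
noncomputable def FS (S : ℝ → ℝ) (hmono : Monotone S) (hcont : Continuous S) :
    StieltjesFunction ℝ :=
  ⟨S, hmono, fun x => hcont.continuousAt.continuousWithinAt⟩

lemma FS_apply (S : ℝ → ℝ) (hmono : Monotone S) (hcont : Continuous S) (x : ℝ) :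
    FS S hmono hcont x = S x := rfl

lemma leftLim_eq (S : ℝ → ℝ) (hmono : Monotone S) (hcont : Continuous S) (x : ℝ) :
    Function.leftLim S x = S x :=
  tendsto_nhds_unique (hmono.tendsto_leftLim x)
    (hcont.continuousAt.tendsto.mono_left nhdsWithin_le_nhds)

lemma FS_measure_Ioo (S : ℝ → ℝ) (hmono : Monotone S) (hcont : Continuous S) (a b : ℝ) :
    (FS S hmono hcont).measure (Ioo a b) = ENNReal.ofReal (S b - S a) := by
  rw [StieltjesFunction.measure_Ioo]
  congr 1
  rw [show (FS S hmono hcont : ℝ → ℝ) = S from rfl, leftLim_eq S hmono hcont]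

lemma id_measure : StieltjesFunction.id.measure = volume := by
  refine Measure.ext_of_Ioc _ _ (fun a b h => ?_)
  rw [StieltjesFunction.measure_Ioc, Real.volume_Ioc]
  rfl

lemma FS_measure_le (S : ℝ → ℝ) (L : NNReal) (hmono : Monotone S) (hlip : LipschitzWith L S) :
    (FS S hmono hlip.continuous).measure ≤ (L : ℝ≥0∞) • volume := by
  have hTm : Monotone (fun x => (L : ℝ) * x - S x) := by
    intro a b hab
    have h1 := hlip.dist_le_mul a b
    have h2 : S a ≤ S b := hmono hab
    rw [Real.dist_eq, Real.dist_eq, abs_of_nonpos (show S a - S b ≤ 0 by linarith),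
      abs_of_nonpos (show a - b ≤ 0 by linarith)] at h1
    dsimp only
    linarith
  set T : StieltjesFunction ℝ :=
    ⟨fun x => (L : ℝ) * x - S x, hTm,
      fun x => ((continuous_const.mul continuous_id).sub
        hlip.continuous).continuousAt.continuousWithinAt⟩
  have hsum : FS S hmono hlip.continuous + T = (L : ℝ≥0) • StieltjesFunction.id := by
    apply StieltjesFunction.ext
    intro x
    show S x + ((L : ℝ) * x - S x) = (L : ℝ) * x
    ring
  have hmeas : (FS S hmono hlip.continuous).measure + T.measure = (L : ℝ≥0∞) • volume := by
    rw [← StieltjesFunction.measure_add, hsum, StieltjesFunction.measure_smul, id_measure]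
    rfl
  calc (FS S hmono hlip.continuous).measure
      ≤ (FS S hmono hlip.continuous).measure + T.measure := Measure.le_add_right le_rfl
    _ = (L : ℝ≥0∞) • volume := hmeas

lemma FS_ac (S : ℝ → ℝ) (L : NNReal) (hmono : Monotone S) (hlip : LipschitzWith L S) :
    (FS S hmono hlip.continuous).measure ≪ volume := by
  refine Measure.AbsolutelyContinuous.mk (fun s hs h0 => ?_)
  have := FS_measure_le S L hmono hlip s
  rw [Measure.smul_apply, h0, smul_zero] at this
  exact le_antisymm this zero_le

lemma spec_pos (S : ℝ → ℝ) (hmono : Monotone S) (hcont : Continuous S) {r q : ℝ}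
    (hr : 0 ≤ r) (hq : q ∈ Ioo (S 0) (S r)) :
    0 ≤ pseudoInv S q ∧ pseudoInv S q ≤ r ∧
      ∀ τ : ℝ, (τ ∈ Ioo 0 r ∧ S τ < q) ↔ τ ∈ Ioo 0 (pseudoInv S q) := by
  obtain ⟨z₀, hz₀, hz₀q⟩ : ∃ z ∈ Icc 0 r, S z = q :=
    intermediate_value_Icc hr hcont.continuousOn ⟨hq.1.le, hq.2.le⟩
  set Q := {z : ℝ | S z = q} with hQ
  have hlb : ∀ z ∈ Q, (0:ℝ) ≤ z := by
    intro z hz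
    by_contra h
    push_neg at h
    have : S z ≤ S 0 := hmono h.le
    rw [hz] at this
    exact absurd hq.1 (not_lt.2 this)
  have hbdd : BddBelow Q := ⟨0, hlb⟩
  have hne : Q.Nonempty := ⟨z₀, hz₀q⟩
  have hclosed : IsClosed Q := isClosed_eq hcont continuous_const
  have hmem : sInf Q ∈ Q := hclosed.csInf_mem hne hbdd
  have hpi : pseudoInv S q = sInf Q := if_pos hq.1
  have h0le : 0 ≤ pseudoInv S q := hpi ▸ le_csInf hne hlb
  have hler : pseudoInv S q ≤ r := hpi ▸ le_trans (csInf_le hbdd hz₀q) hz₀.2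
  refine ⟨h0le, hler, fun τ => ⟨?_, ?_⟩⟩
  · rintro ⟨⟨hτ0, _⟩, hSτ⟩
    refine ⟨hτ0, ?_⟩
    rw [hpi]
    by_contra h
    push_neg at h
    have : S (sInf Q) ≤ S τ := hmono h
    rw [hmem] at this
    exact absurd hSτ (not_lt.2 this)
  · rintro ⟨hτ0, hτlt⟩
    rw [hpi] at hτlt
    refine ⟨⟨hτ0, lt_of_lt_of_le hτlt (hpi ▸ hler)⟩, ?_⟩
    have hle : S τ ≤ q := hmem ▸ hmono hτlt.le
    refine lt_of_le_of_ne hle (fun heq => ?_)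
    exact absurd (csInf_le hbdd (show τ ∈ Q from heq)) (not_le.2 hτlt)

lemma spec_neg (S : ℝ → ℝ) (hmono : Monotone S) (hcont : Continuous S) {r q : ℝ}
    (hr : r ≤ 0) (hq : q ∈ Ioo (S r) (S 0)) :
    r ≤ pseudoInv S q ∧ pseudoInv S q ≤ 0 ∧
      ∀ τ : ℝ, (τ ∈ Ioo r 0 ∧ q < S τ) ↔ τ ∈ Ioo (pseudoInv S q) 0 := by
  obtain ⟨z₀, hz₀, hz₀q⟩ : ∃ z ∈ Icc r 0, S z = q :=
    intermediate_value_Icc hr hcont.continuousOn ⟨hq.1.le, hq.2.le⟩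
  set Q := {z : ℝ | S z = q} with hQ
  have hub : ∀ z ∈ Q, z ≤ (0:ℝ) := by
    intro z hz
    by_contra h
    push_neg at h
    have : S 0 ≤ S z := hmono h.le
    rw [hz] at this
    exact absurd hq.2 (not_lt.2 this)
  have hbdd : BddAbove Q := ⟨0, hub⟩
  have hne : Q.Nonempty := ⟨z₀, hz₀q⟩
  have hclosed : IsClosed Q := isClosed_eq hcont continuous_const
  have hmem : sSup Q ∈ Q := hclosed.csSup_mem hne hbdd
  have hpi : pseudoInv S q = sSup Q := by
    rw [pseudoInv, if_neg (not_lt.2 hq.2.le), if_neg hq.2.ne]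
  have hle0 : pseudoInv S q ≤ 0 := hpi ▸ csSup_le hne hub
  have hrle : r ≤ pseudoInv S q := hpi ▸ le_trans hz₀.1 (le_csSup hbdd hz₀q)
  refine ⟨hrle, hle0, fun τ => ⟨?_, ?_⟩⟩
  · rintro ⟨⟨_, hτ0⟩, hSτ⟩
    refine ⟨?_, hτ0⟩
    rw [hpi]
    by_contra h
    push_neg at h
    have : S τ ≤ S (sSup Q) := hmono h
    rw [hmem] at this
    exact absurd hSτ (not_lt.2 this)
  · rintro ⟨hτgt, hτ0⟩
    rw [hpi] at hτgt
    refine ⟨⟨lt_of_le_of_lt (hpi ▸ hrle) hτgt, hτ0⟩, ?_⟩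
    have hle : q ≤ S τ := hmem ▸ hmono hτgt.le
    refine lt_of_le_of_ne hle (fun heq => ?_)
    exact absurd (le_csSup hbdd (show τ ∈ Q from heq.symm)) (not_le.2 hτgt)


lemma key_pos (S : ℝ → ℝ) (L : ℝ≥0) (hmono : Monotone S) (hlip : LipschitzWith L S)
    {r : ℝ} (hr : 0 ≤ r) :
    ∫ q in (S 0)..(S r), pseudoInv S q
      = ∫ τ in (0:ℝ)..r,
          τ * (((FS S hmono hlip.continuous).measure.rnDeriv volume τ).toReal) := by
  have hcont := hlip.continuous
  set μ := (FS S hmono hlip.continuous).measure with hμ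
  set g := μ.rnDeriv volume with hgdef
  have hgm : Measurable g := Measure.measurable_rnDeriv _ _
  have hac : μ ≪ volume := FS_ac S L hmono hlip
  -- Step A : the double integral for the pseudo-inverse
  set A : Set (ℝ × ℝ) := (Ioo (S 0) (S r) ×ˢ Ioo 0 r) ∩ {p : ℝ × ℝ | S p.2 < p.1} with hA
  have hAm : MeasurableSet A :=
    (measurableSet_Ioo.prod measurableSet_Ioo).inter
      (measurableSet_lt (hcont.measurable.comp measurable_snd) measurable_fst)
  have hsecA : ∀ q ∈ Ioo (S 0) (S r), Prod.mk q ⁻¹' A = Ioo 0 (pseudoInv S q) := by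
    intro q hq
    ext τ
    simp only [hA, mem_preimage, mem_inter_iff, mem_prod, mem_setOf_eq]
    constructor
    · rintro ⟨⟨_, hτ⟩, hS⟩
      exact ((spec_pos S hmono hcont hr hq).2.2 τ).1 ⟨hτ, hS⟩
    · intro h
      obtain ⟨h1, h2⟩ := ((spec_pos S hmono hcont hr hq).2.2 τ).2 h
      exact ⟨⟨hq, h1⟩, h2⟩
  have hAfun : (fun q => volume (Prod.mk q ⁻¹' A))
      = (Ioo (S 0) (S r)).indicator (fun q => ENNReal.ofReal (pseudoInv S q)) := by
    funext q
    by_cases hq : q ∈ Ioo (S 0) (S r)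
    · rw [hsecA q hq, Real.volume_Ioo, indicator_of_mem hq, sub_zero]
    · have hsec : Prod.mk q ⁻¹' A = ∅ := by
        ext τ
        simp only [hA, mem_preimage, mem_inter_iff, mem_prod, mem_setOf_eq,
          mem_empty_iff_false, iff_false, not_and]
        intro h
        exact absurd h.1 hq
      rw [hsec, measure_empty, indicator_of_notMem hq]
  have hI1 : (volume.prod volume) A
      = ∫⁻ q in Ioo (S 0) (S r), ENNReal.ofReal (pseudoInv S q) := by
    rw [Measure.prod_apply hAm, hAfun, lintegral_indicator measurableSet_Ioo _]
  have hI2 : (volume.prod volume) A = ∫⁻ τ in Ioo 0 r, ENNReal.ofReal (S r - S τ) := by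
    rw [Measure.prod_apply_symm hAm]
    have hfun : (fun τ => volume ((fun q => (q, τ)) ⁻¹' A))
        = (Ioo 0 r).indicator (fun τ => ENNReal.ofReal (S r - S τ)) := by
      funext τ
      by_cases hτ : τ ∈ Ioo 0 r
      · have hsec : ((fun q => (q, τ)) ⁻¹' A) = Ioo (S τ) (S r) := by
          ext q
          simp only [hA, mem_preimage, mem_inter_iff, mem_prod, mem_setOf_eq, mem_Ioo]
          constructor
          · rintro ⟨⟨⟨_, hq2⟩, _⟩, hS⟩
            exact ⟨hS, hq2⟩
          · rintro ⟨h1, h2⟩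
            exact ⟨⟨⟨lt_of_le_of_lt (hmono hτ.1.le) h1, h2⟩, hτ⟩, h1⟩
        rw [hsec, Real.volume_Ioo, indicator_of_mem hτ]
      · have hsec : ((fun q => (q, τ)) ⁻¹' A) = ∅ := by
          ext q
          simp only [hA, mem_preimage, mem_inter_iff, mem_prod, mem_setOf_eq,
            mem_empty_iff_false, iff_false, not_and]
          intro h
          exact absurd h.2 hτ
        rw [hsec, measure_empty, indicator_of_notMem hτ]
    rw [hfun, lintegral_indicator measurableSet_Ioo _]
  -- Step B : the double integral for the measure μ
  set B : Set (ℝ × ℝ) := (Ioo 0 r ×ˢ Ioo 0 r) ∩ {p : ℝ × ℝ | p.1 < p.2} with hB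
  have hBm : MeasurableSet B :=
    (measurableSet_Ioo.prod measurableSet_Ioo).inter
      (measurableSet_lt measurable_fst measurable_snd)
  have hJ1 : (volume.prod μ) B = ∫⁻ s in Ioo 0 r, ENNReal.ofReal (S r - S s) := by
    rw [Measure.prod_apply hBm]
    have hfun : (fun s => μ (Prod.mk s ⁻¹' B))
        = (Ioo 0 r).indicator (fun s => ENNReal.ofReal (S r - S s)) := by
      funext s
      by_cases hs : s ∈ Ioo 0 r
      · have hsec : Prod.mk s ⁻¹' B = Ioo s r := by
          ext τ
          simp only [hB, mem_preimage, mem_inter_iff, mem_prod, mem_setOf_eq, mem_Ioo]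
          constructor
          · rintro ⟨⟨_, ⟨_, h2⟩⟩, h3⟩
            exact ⟨h3, h2⟩
          · rintro ⟨h1, h2⟩
            exact ⟨⟨hs, ⟨lt_trans hs.1 h1, h2⟩⟩, h1⟩
        rw [hsec, indicator_of_mem hs, hμ, FS_measure_Ioo]
      · have hsec : Prod.mk s ⁻¹' B = ∅ := by
          ext τ
          simp only [hB, mem_preimage, mem_inter_iff, mem_prod, mem_setOf_eq,
            mem_empty_iff_false, iff_false, not_and]
          intro h
          exact absurd h.1 hs
        rw [hsec, measure_empty, indicator_of_notMem hs]
    rw [hfun, lintegral_indicator measurableSet_Ioo _]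
  have hJ2 : (volume.prod μ) B = ∫⁻ τ in Ioo 0 r, ENNReal.ofReal τ ∂μ := by
    rw [Measure.prod_apply_symm hBm]
    have hfun : (fun τ => volume ((fun s => (s, τ)) ⁻¹' B))
        = (Ioo 0 r).indicator (fun τ => ENNReal.ofReal τ) := by
      funext τ
      by_cases hτ : τ ∈ Ioo 0 r
      · have hsec : ((fun s => (s, τ)) ⁻¹' B) = Ioo 0 τ := by
          ext s
          simp only [hB, mem_preimage, mem_inter_iff, mem_prod, mem_setOf_eq, mem_Ioo]
          constructor
          · rintro ⟨⟨⟨h1, _⟩, _⟩, h3⟩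
            exact ⟨h1, h3⟩
          · rintro ⟨h1, h2⟩
            exact ⟨⟨⟨h1, lt_trans h2 hτ.2⟩, hτ⟩, h2⟩
        rw [hsec, Real.volume_Ioo, indicator_of_mem hτ, sub_zero]
      · have hsec : ((fun s => (s, τ)) ⁻¹' B) = ∅ := by
          ext s
          simp only [hB, mem_preimage, mem_inter_iff, mem_prod, mem_setOf_eq,
            mem_empty_iff_false, iff_false, not_and]
          intro h
          exact absurd h.2 hτ
        rw [hsec, measure_empty, indicator_of_notMem hτ]
    rw [hfun, lintegral_indicator measurableSet_Ioo _]
  -- rewrite the μ-integral as a weighted volume integral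
  have hμrestrict : μ.restrict (Ioo 0 r) = (volume.restrict (Ioo 0 r)).withDensity g := by
    rw [← restrict_withDensity measurableSet_Ioo, hgdef, Measure.withDensity_rnDeriv_eq _ _ hac]
  have hJ3 : ∫⁻ τ in Ioo 0 r, ENNReal.ofReal τ ∂μ
      = ∫⁻ τ in Ioo 0 r, g τ * ENNReal.ofReal τ := by
    rw [hμrestrict, lintegral_withDensity_eq_lintegral_mul _ hgm ENNReal.measurable_ofReal]
    rfl
  -- Conversion of the interval integrals
  have hC : ∫ q in (S 0)..(S r), pseudoInv S q
      = (∫⁻ q in Ioo (S 0) (S r), ENNReal.ofReal (pseudoInv S q)).toReal := by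
    rw [intervalIntegral.integral_of_le (hmono hr), integral_Ioc_eq_integral_Ioo]
    rw [integral_eq_lintegral_of_nonneg_ae]
    · exact ae_restrict_of_forall_mem measurableSet_Ioo
        (fun q hq => (spec_pos S hmono hcont hr hq).1)
    · have hmeas : Measurable (fun q => (volume (Prod.mk q ⁻¹' A)).toReal) :=
        (measurable_measure_prodMk_left hAm).ennreal_toReal
      refine hmeas.aestronglyMeasurable.congr ?_
      refine ae_restrict_of_forall_mem measurableSet_Ioo (fun q hq => ?_)
      dsimp only
      rw [hsecA q hq, Real.volume_Ioo, sub_zero,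
        ENNReal.toReal_ofReal (spec_pos S hmono hcont hr hq).1]
  have hD : ∫ τ in (0:ℝ)..r, τ * (g τ).toReal
      = (∫⁻ τ in Ioo 0 r, g τ * ENNReal.ofReal τ).toReal := by
    rw [intervalIntegral.integral_of_le hr, integral_Ioc_eq_integral_Ioo]
    rw [integral_eq_lintegral_of_nonneg_ae]
    · congr 1
      refine lintegral_congr_ae ?_
      have hfin : ∀ᵐ τ ∂(volume.restrict (Ioo 0 r)), g τ < ⊤ :=
        ae_restrict_of_ae (Measure.rnDeriv_lt_top μ volume)
      filter_upwards [hfin, ae_restrict_mem measurableSet_Ioo] with τ hτfin hτ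
      rw [ENNReal.ofReal_mul hτ.1.le, ENNReal.ofReal_toReal hτfin.ne, mul_comm]
    · refine ae_restrict_of_forall_mem measurableSet_Ioo (fun τ hτ => ?_)
      exact mul_nonneg hτ.1.le ENNReal.toReal_nonneg
    · exact (measurable_id.mul hgm.ennreal_toReal).aestronglyMeasurable
  rw [hC, hD]
  exact congrArg ENNReal.toReal ((hI1.symm.trans hI2).trans ((hJ1.symm.trans hJ2).trans hJ3))


lemma key_neg (S : ℝ → ℝ) (L : ℝ≥0) (hmono : Monotone S) (hlip : LipschitzWith L S)
    {r : ℝ} (hr : r ≤ 0) :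
    ∫ q in (S 0)..(S r), pseudoInv S q
      = ∫ τ in (0:ℝ)..r,
          τ * (((FS S hmono hlip.continuous).measure.rnDeriv volume τ).toReal) := by
  have hcont := hlip.continuous
  set μ := (FS S hmono hlip.continuous).measure with hμ
  set g := μ.rnDeriv volume with hgdef
  have hgm : Measurable g := Measure.measurable_rnDeriv _ _
  have hac : μ ≪ volume := FS_ac S L hmono hlip
  -- Step A
  set A : Set (ℝ × ℝ) := (Ioo (S r) (S 0) ×ˢ Ioo r 0) ∩ {p : ℝ × ℝ | p.1 < S p.2} with hA
  have hAm : MeasurableSet A :=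
    (measurableSet_Ioo.prod measurableSet_Ioo).inter
      (measurableSet_lt measurable_fst (hcont.measurable.comp measurable_snd))
  have hsecA : ∀ q ∈ Ioo (S r) (S 0), Prod.mk q ⁻¹' A = Ioo (pseudoInv S q) 0 := by
    intro q hq
    ext τ
    simp only [hA, mem_preimage, mem_inter_iff, mem_prod, mem_setOf_eq]
    constructor
    · rintro ⟨⟨_, hτ⟩, hS⟩
      exact ((spec_neg S hmono hcont hr hq).2.2 τ).1 ⟨hτ, hS⟩
    · intro h
      obtain ⟨h1, h2⟩ := ((spec_neg S hmono hcont hr hq).2.2 τ).2 h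
      exact ⟨⟨hq, h1⟩, h2⟩
  have hAfun : (fun q => volume (Prod.mk q ⁻¹' A))
      = (Ioo (S r) (S 0)).indicator (fun q => ENNReal.ofReal (-pseudoInv S q)) := by
    funext q
    by_cases hq : q ∈ Ioo (S r) (S 0)
    · rw [hsecA q hq, Real.volume_Ioo, indicator_of_mem hq, zero_sub]
    · have hsec : Prod.mk q ⁻¹' A = ∅ := by
        ext τ
        simp only [hA, mem_preimage, mem_inter_iff, mem_prod, mem_setOf_eq,
          mem_empty_iff_false, iff_false, not_and]
        intro h
        exact absurd h.1 hq
      rw [hsec, measure_empty, indicator_of_notMem hq]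
  have hI1 : (volume.prod volume) A
      = ∫⁻ q in Ioo (S r) (S 0), ENNReal.ofReal (-pseudoInv S q) := by
    rw [Measure.prod_apply hAm, hAfun, lintegral_indicator measurableSet_Ioo _]
  have hI2 : (volume.prod volume) A = ∫⁻ τ in Ioo r 0, ENNReal.ofReal (S τ - S r) := by
    rw [Measure.prod_apply_symm hAm]
    have hfun : (fun τ => volume ((fun q => (q, τ)) ⁻¹' A))
        = (Ioo r 0).indicator (fun τ => ENNReal.ofReal (S τ - S r)) := by
      funext τ
      by_cases hτ : τ ∈ Ioo r 0
      · have hsec : ((fun q => (q, τ)) ⁻¹' A) = Ioo (S r) (S τ) := by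
          ext q
          simp only [hA, mem_preimage, mem_inter_iff, mem_prod, mem_setOf_eq, mem_Ioo]
          constructor
          · rintro ⟨⟨⟨hq1, _⟩, _⟩, hS⟩
            exact ⟨hq1, hS⟩
          · rintro ⟨h1, h2⟩
            exact ⟨⟨⟨h1, lt_of_lt_of_le h2 (hmono hτ.2.le)⟩, hτ⟩, h2⟩
        rw [hsec, Real.volume_Ioo, indicator_of_mem hτ]
      · have hsec : ((fun q => (q, τ)) ⁻¹' A) = ∅ := by
          ext q
          simp only [hA, mem_preimage, mem_inter_iff, mem_prod, mem_setOf_eq,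
            mem_empty_iff_false, iff_false, not_and]
          intro h
          exact absurd h.2 hτ
        rw [hsec, measure_empty, indicator_of_notMem hτ]
    rw [hfun, lintegral_indicator measurableSet_Ioo _]
  -- Step B
  set B : Set (ℝ × ℝ) := (Ioo r 0 ×ˢ Ioo r 0) ∩ {p : ℝ × ℝ | p.2 < p.1} with hB
  have hBm : MeasurableSet B :=
    (measurableSet_Ioo.prod measurableSet_Ioo).inter
      (measurableSet_lt measurable_snd measurable_fst)
  have hJ1 : (volume.prod μ) B = ∫⁻ s in Ioo r 0, ENNReal.ofReal (S s - S r) := by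
    rw [Measure.prod_apply hBm]
    have hfun : (fun s => μ (Prod.mk s ⁻¹' B))
        = (Ioo r 0).indicator (fun s => ENNReal.ofReal (S s - S r)) := by
      funext s
      by_cases hs : s ∈ Ioo r 0
      · have hsec : Prod.mk s ⁻¹' B = Ioo r s := by
          ext τ
          simp only [hB, mem_preimage, mem_inter_iff, mem_prod, mem_setOf_eq, mem_Ioo]
          constructor
          · rintro ⟨⟨_, ⟨h1, _⟩⟩, h3⟩
            exact ⟨h1, h3⟩
          · rintro ⟨h1, h2⟩
            exact ⟨⟨hs, ⟨h1, lt_trans h2 hs.2⟩⟩, h2⟩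
        rw [hsec, indicator_of_mem hs, hμ, FS_measure_Ioo]
      · have hsec : Prod.mk s ⁻¹' B = ∅ := by
          ext τ
          simp only [hB, mem_preimage, mem_inter_iff, mem_prod, mem_setOf_eq,
            mem_empty_iff_false, iff_false, not_and]
          intro h
          exact absurd h.1 hs
        rw [hsec, measure_empty, indicator_of_notMem hs]
    rw [hfun, lintegral_indicator measurableSet_Ioo _]
  have hJ2 : (volume.prod μ) B = ∫⁻ τ in Ioo r 0, ENNReal.ofReal (-τ) ∂μ := by
    rw [Measure.prod_apply_symm hBm]
    have hfun : (fun τ => volume ((fun s => (s, τ)) ⁻¹' B))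
        = (Ioo r 0).indicator (fun τ => ENNReal.ofReal (-τ)) := by
      funext τ
      by_cases hτ : τ ∈ Ioo r 0
      · have hsec : ((fun s => (s, τ)) ⁻¹' B) = Ioo τ 0 := by
          ext s
          simp only [hB, mem_preimage, mem_inter_iff, mem_prod, mem_setOf_eq, mem_Ioo]
          constructor
          · rintro ⟨⟨⟨_, h2⟩, _⟩, h3⟩
            exact ⟨h3, h2⟩
          · rintro ⟨h1, h2⟩
            exact ⟨⟨⟨lt_trans hτ.1 h1, h2⟩, hτ⟩, h1⟩
        rw [hsec, Real.volume_Ioo, indicator_of_mem hτ, zero_sub]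
      · have hsec : ((fun s => (s, τ)) ⁻¹' B) = ∅ := by
          ext s
          simp only [hB, mem_preimage, mem_inter_iff, mem_prod, mem_setOf_eq,
            mem_empty_iff_false, iff_false, not_and]
          intro h
          exact absurd h.2 hτ
        rw [hsec, measure_empty, indicator_of_notMem hτ]
    rw [hfun, lintegral_indicator measurableSet_Ioo _]
  have hμrestrict : μ.restrict (Ioo r 0) = (volume.restrict (Ioo r 0)).withDensity g := by
    rw [← restrict_withDensity measurableSet_Ioo, hgdef, Measure.withDensity_rnDeriv_eq _ _ hac]
  have hJ3 : ∫⁻ τ in Ioo r 0, ENNReal.ofReal (-τ) ∂μ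
      = ∫⁻ τ in Ioo r 0, g τ * ENNReal.ofReal (-τ) := by
    rw [hμrestrict, lintegral_withDensity_eq_lintegral_mul _ hgm
      measurable_neg.ennreal_ofReal]
    rfl
  -- Conversions
  have hC : ∫ q in (S 0)..(S r), pseudoInv S q
      = (∫⁻ q in Ioo (S r) (S 0), ENNReal.ofReal (-pseudoInv S q)).toReal := by
    rw [intervalIntegral.integral_symm, intervalIntegral.integral_of_le (hmono hr),
      integral_Ioc_eq_integral_Ioo, ← integral_neg]
    rw [integral_eq_lintegral_of_nonneg_ae]
    · exact ae_restrict_of_forall_mem measurableSet_Ioo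
        (fun q hq => neg_nonneg.2 (spec_neg S hmono hcont hr hq).2.1)
    · have hmeas : Measurable (fun q => (volume (Prod.mk q ⁻¹' A)).toReal) :=
        (measurable_measure_prodMk_left hAm).ennreal_toReal
      refine hmeas.aestronglyMeasurable.congr ?_
      refine ae_restrict_of_forall_mem measurableSet_Ioo (fun q hq => ?_)
      dsimp only
      rw [hsecA q hq, Real.volume_Ioo, zero_sub,
        ENNReal.toReal_ofReal (neg_nonneg.2 (spec_neg S hmono hcont hr hq).2.1)]
  have hD : ∫ τ in (0:ℝ)..r, τ * (g τ).toReal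
      = (∫⁻ τ in Ioo r 0, g τ * ENNReal.ofReal (-τ)).toReal := by
    rw [intervalIntegral.integral_symm, intervalIntegral.integral_of_le hr,
      integral_Ioc_eq_integral_Ioo, ← integral_neg]
    rw [integral_eq_lintegral_of_nonneg_ae]
    · congr 1
      refine lintegral_congr_ae ?_
      have hfin : ∀ᵐ τ ∂(volume.restrict (Ioo r 0)), g τ < ⊤ :=
        ae_restrict_of_ae (Measure.rnDeriv_lt_top μ volume)
      filter_upwards [hfin, ae_restrict_mem measurableSet_Ioo] with τ hτfin hτ
      rw [show -(τ * (g τ).toReal) = (-τ) * (g τ).toReal by ring,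
        ENNReal.ofReal_mul (neg_nonneg.2 hτ.2.le), ENNReal.ofReal_toReal hτfin.ne, mul_comm]
    · refine ae_restrict_of_forall_mem measurableSet_Ioo (fun τ hτ => ?_)
      show 0 ≤ -(τ * (g τ).toReal)
      nlinarith [ENNReal.toReal_nonneg (a := g τ), hτ.2.le]
    · exact ((measurable_id.mul hgm.ennreal_toReal).neg).aestronglyMeasurable
  rw [hC, hD]
  exact congrArg ENNReal.toReal ((hI1.symm.trans hI2).trans ((hJ1.symm.trans hJ2).trans hJ3))

end BfunAux

/-- For every `r ∈ ℝ`, `B(S(r)) = ∫_0^r τ S'(τ) dτ`, where the derivative `S'` of the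
Lipschitz continuous function `S` exists at almost every point, and `τ ↦ τ S'(τ)` is
integrable on the interval with endpoints `0` and `r`. -/
theorem Bfun_comp_S_eq_integral (S : ℝ → ℝ) (L : NNReal)
    (hmono : Monotone S) (hlip : LipschitzWith L S) (r : ℝ) :
    (∀ᵐ τ : ℝ ∂volume, DifferentiableAt ℝ S τ) ∧
    IntervalIntegrable (fun τ : ℝ => τ * deriv S τ) volume 0 r ∧
    Bfun S (S r) = ((∫ τ in (0:ℝ)..r, τ * deriv S τ) : ℝ) := by
  have hae : ∀ᵐ x : ℝ ∂volume,
      HasDerivAt S (((BfunAux.FS S hmono hlip.continuous).measure.rnDeriv volume x).toReal) x :=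
    (BfunAux.FS S hmono hlip.continuous).ae_hasDerivAt
  have hdiff : ∀ᵐ τ : ℝ ∂volume, DifferentiableAt ℝ S τ := by
    filter_upwards [hae] with x hx using hx.differentiableAt
  have hderiv_ae : (fun τ => deriv S τ)
      =ᵐ[volume] fun τ => (((BfunAux.FS S hmono hlip.continuous).measure.rnDeriv volume τ).toReal) := by
    filter_upwards [hae] with x hx using hx.deriv
  have hbound : ∀ τ : ℝ, |deriv S τ| ≤ (L : ℝ) := fun τ => by
    simpa [Real.norm_eq_abs] using norm_deriv_le_of_lipschitz (𝕜 := ℝ) hlip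
  have hint : IntervalIntegrable (fun τ : ℝ => τ * deriv S τ) volume 0 r := by
    rw [intervalIntegrable_iff]
    have hfin : volume (Set.uIoc (0:ℝ) r) < ⊤ := measure_Ioc_lt_top
    refine MeasureTheory.Integrable.mono'
      (integrableOn_const (C := |r| * (L : ℝ)) hfin.ne)
      ((measurable_id.mul (measurable_deriv S)).aestronglyMeasurable) ?_
    refine ae_restrict_of_forall_mem measurableSet_uIoc (fun τ hτ => ?_)
    have h1 : |τ| ≤ |r| := by
      rcases Set.mem_uIoc.1 hτ with ⟨ha, hb⟩ | ⟨ha, hb⟩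
      · rw [abs_of_pos ha]
        exact le_trans hb (le_abs_self r)
      · rw [abs_of_nonpos hb, abs_of_neg (lt_of_lt_of_le ha hb)]
        linarith
    rw [Real.norm_eq_abs, abs_mul]
    exact mul_le_mul h1 (hbound τ) (abs_nonneg _) (abs_nonneg _)
  refine ⟨hdiff, hint, ?_⟩
  have hS : S r ∈ Set.range S := ⟨r, rfl⟩
  rw [Bfun, if_pos hS]
  have hre : ∫ τ in (0:ℝ)..r, τ * deriv S τ
      = ∫ τ in (0:ℝ)..r,
          τ * (((BfunAux.FS S hmono hlip.continuous).measure.rnDeriv volume τ).toReal) := by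
    apply intervalIntegral.integral_congr_ae
    filter_upwards [hderiv_ae] with τ hτ
    intro _
    rw [hτ]
  rw [hre]
  rcases le_total 0 r with h | h
  · exact congrArg (fun x : ℝ => (x : EReal)) (BfunAux.key_pos S L hmono hlip h)
  · exact congrArg (fun x : ℝ => (x : EReal)) (BfunAux.key_neg S L hmono hlip h)
end

section
/- For all real numbers a and b one has a·(S(b) − S(a)) ≤ B(S(b)) − B(S(a)). (In particular both B(S(a)) and B(S(b)) are finite since S(a), S(b) ∈ R_S.) -/
open MeasureTheory
open scoped Classical

section Aux

variable {S : ℝ → ℝ}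

lemma lb_zero (hmono : Monotone S) {q : ℝ} (h : S 0 < q) :
    ∀ z ∈ {z : ℝ | S z = q}, (0 : ℝ) ≤ z := by
  intro z hz
  by_contra hzn
  push_neg at hzn
  have : S z ≤ S 0 := hmono hzn.le
  rw [hz] at this
  exact absurd h (not_lt.2 this)

lemma ub_zero (hmono : Monotone S) {q : ℝ} (h : q < S 0) :
    ∀ z ∈ {z : ℝ | S z = q}, z ≤ (0 : ℝ) := by
  intro z hz
  by_contra hzn
  push_neg at hzn
  have : S 0 ≤ S z := hmono hzn.le
  rw [hz] at this
  exact absurd h (not_lt.2 this)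

lemma le_pinv (hmono : Monotone S) {a τ : ℝ} (hlt : S a < τ) (hτ : τ ∈ Set.range S) :
    a ≤ pseudoInv S τ := by
  obtain ⟨w, hw⟩ := hτ
  have hwa : a ≤ w := by
    by_contra hn
    push_neg at hn
    exact absurd hlt (not_lt.2 (hw ▸ hmono hn.le))
  unfold pseudoInv
  by_cases h1 : S 0 < τ
  · rw [if_pos h1]
    refine le_csInf ⟨w, hw⟩ ?_
    intro z hz
    by_contra hn
    push_neg at hn
    exact absurd hlt (not_lt.2 (hz ▸ hmono hn.le))
  · by_cases h2 : τ = S 0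
    · rw [if_neg h1, if_pos h2]
      by_contra hn
      push_neg at hn
      exact absurd hlt (not_lt.2 (h2 ▸ hmono hn.le))
    · rw [if_neg h1, if_neg h2]
      have hτ0 : τ < S 0 := lt_of_le_of_ne (not_lt.1 h1) h2
      exact hwa.trans (le_csSup ⟨0, fun z hz => ub_zero hmono hτ0 z hz⟩ hw)

lemma pinv_le (hmono : Monotone S) {a τ : ℝ} (hlt : τ < S a) (hτ : τ ∈ Set.range S) :
    pseudoInv S τ ≤ a := by
  obtain ⟨w, hw⟩ := hτ
  have hwa : w ≤ a := by
    by_contra hn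
    push_neg at hn
    exact absurd hlt (not_lt.2 (hw ▸ hmono hn.le))
  unfold pseudoInv
  by_cases h1 : S 0 < τ
  · rw [if_pos h1]
    exact (csInf_le ⟨0, fun z hz => lb_zero hmono h1 z hz⟩ hw).trans hwa
  · by_cases h2 : τ = S 0
    · rw [if_neg h1, if_pos h2]
      by_contra hn
      push_neg at hn
      exact absurd hlt (not_lt.2 (h2 ▸ hmono hn.le))
    · rw [if_neg h1, if_neg h2]
      refine csSup_le ⟨w, hw⟩ ?_
      intro z hz
      by_contra hn
      push_neg at hn
      exact absurd hlt (not_lt.2 (hz ▸ hmono hn.le))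

lemma pinv_monoOn (hmono : Monotone S) (hcont : Continuous S) :
    MonotoneOn (pseudoInv S) (Set.range S) := by
  rintro q1 ⟨u, hu⟩ q2 ⟨v, hv⟩ h12
  unfold pseudoInv
  rcases lt_trichotomy (S 0) q1 with hA | hA | hA
  · have h2 : S 0 < q2 := hA.trans_le h12
    rw [if_pos hA, if_pos h2]
    refine le_csInf ⟨v, hv⟩ ?_
    intro z hz
    have hz0 : (0 : ℝ) ≤ z := lb_zero hmono h2 z hz
    have hmem : q1 ∈ Set.Icc (S 0) (S z) := ⟨hA.le, hz ▸ h12⟩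
    obtain ⟨z', hz'mem, hz'⟩ := intermediate_value_Icc hz0 hcont.continuousOn hmem
    exact (csInf_le ⟨0, fun y hy => lb_zero hmono hA y hy⟩ hz').trans hz'mem.2
  · rw [if_neg (by rw [hA]; exact lt_irrefl _), if_pos hA.symm]
    rcases eq_or_lt_of_le h12 with heq | hlt
    · rw [if_neg (heq ▸ (by rw [hA]; exact lt_irrefl _ : ¬ S 0 < q1)),
        if_pos (heq ▸ hA.symm)]
    · rw [if_pos (hA ▸ hlt)]
      exact le_csInf ⟨v, hv⟩ (fun z hz => lb_zero hmono (hA ▸ hlt) z hz)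
  · rw [if_neg (not_lt.2 hA.le), if_neg (ne_of_lt hA)]
    rcases lt_trichotomy (S 0) q2 with hB | hB | hB
    · rw [if_pos hB]
      refine (csSup_le (⟨u, hu⟩ : {z : ℝ | S z = q1}.Nonempty)
          (fun z hz => ub_zero hmono hA z hz)).trans
        (le_csInf (⟨v, hv⟩ : {z : ℝ | S z = q2}.Nonempty)
          (fun z hz => lb_zero hmono hB z hz))
    · rw [if_neg (by rw [hB]; exact lt_irrefl _), if_pos hB.symm]
      exact csSup_le (⟨u, hu⟩ : {z : ℝ | S z = q1}.Nonempty)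
        (fun z hz => ub_zero hmono hA z hz)
    · rw [if_neg (not_lt.2 hB.le), if_neg (ne_of_lt hB)]
      refine csSup_le ⟨u, hu⟩ ?_
      intro z hz
      have hz0 : z ≤ (0 : ℝ) := ub_zero hmono (hz ▸ (h12.trans_lt hB)) z hz
      have hmem : q2 ∈ Set.Icc (S z) (S 0) := ⟨hz ▸ h12, hB.le⟩
      obtain ⟨z', hz'mem, hz'⟩ := intermediate_value_Icc hz0 hcont.continuousOn hmem
      exact hz'mem.1.trans (le_csSup ⟨0, fun y hy => ub_zero hmono hB y hy⟩ hz')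

lemma uIcc_sub_range (hmono : Monotone S) (hcont : Continuous S) (u v : ℝ) :
    Set.uIcc (S u) (S v) ⊆ Set.range S := by
  rcases le_total u v with h | h
  · rw [Set.uIcc_of_le (hmono h)]
    exact (intermediate_value_Icc h hcont.continuousOn).trans (Set.image_subset_range _ _)
  · rw [Set.uIcc_of_ge (hmono h)]
    exact (intermediate_value_Icc h hcont.continuousOn).trans (Set.image_subset_range _ _)

lemma pinv_intInt (hmono : Monotone S) (hcont : Continuous S) (u v : ℝ) :
    IntervalIntegrable (pseudoInv S) volume (S u) (S v) :=
  ((pinv_monoOn hmono hcont).mono (uIcc_sub_range hmono hcont u v)).intervalIntegrable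

end Aux

/-- For all real `a` and `b`, `a·(S(b) − S(a)) ≤ B(S(b)) − B(S(a))`; in particular both
`B(S(a))` and `B(S(b))` are finite since `S(a), S(b)` belong to the range of `S`. -/
theorem mul_sub_le_Bfun_sub (S : ℝ → ℝ) (L : NNReal)
    (hmono : Monotone S) (hlip : LipschitzWith L S) (a b : ℝ) :
    Bfun S (S a) ≠ ⊤ ∧ Bfun S (S b) ≠ ⊤ ∧
    ((a * (S b - S a) : ℝ) : EReal) ≤ Bfun S (S b) - Bfun S (S a) := by
  have hcont : Continuous S := hlip.continuous
  have hra : S a ∈ Set.range S := ⟨a, rfl⟩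
  have hrb : S b ∈ Set.range S := ⟨b, rfl⟩
  have hBa : Bfun S (S a) = ((∫ τ in (S 0)..(S a), pseudoInv S τ : ℝ) : EReal) := by
    simp [Bfun, hra]
  have hBb : Bfun S (S b) = ((∫ τ in (S 0)..(S b), pseudoInv S τ : ℝ) : EReal) := by
    simp [Bfun, hrb]
  refine ⟨by rw [hBa]; exact EReal.coe_ne_top _, by rw [hBb]; exact EReal.coe_ne_top _, ?_⟩
  rw [hBa, hBb, ← EReal.coe_sub, EReal.coe_le_coe_iff]
  have hint : (∫ τ in (S 0)..(S b), pseudoInv S τ) - (∫ τ in (S 0)..(S a), pseudoInv S τ)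
      = ∫ τ in (S a)..(S b), pseudoInv S τ :=
    intervalIntegral.integral_interval_sub_left (pinv_intInt hmono hcont 0 b)
      (pinv_intInt hmono hcont 0 a)
  rw [hint]
  have hae_ne : ∀ᵐ (τ : ℝ), τ ≠ S a := by
    have : volume ({S a} : Set ℝ) = 0 := Real.volume_singleton
    rw [ae_iff]
    simp [Set.setOf_eq_eq_singleton, this]
  rcases le_total (S a) (S b) with hab | hab
  · have hmem : ∀ τ ∈ Set.Icc (S a) (S b), τ ∈ Set.range S := by
      intro τ hτ
      exact uIcc_sub_range hmono hcont a b (by rw [Set.uIcc_of_le hab]; exact hτ)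
    have hae : (fun _ => a) ≤ᵐ[volume.restrict (Set.Icc (S a) (S b))] pseudoInv S := by
      rw [Filter.EventuallyLE, ae_restrict_iff' measurableSet_Icc]
      filter_upwards [hae_ne] with τ hτne hτmem
      exact le_pinv hmono (lt_of_le_of_ne hτmem.1 (Ne.symm hτne)) (hmem τ hτmem)
    have hle := intervalIntegral.integral_mono_ae_restrict hab
      (intervalIntegrable_const (c := a)) (pinv_intInt hmono hcont a b) hae
    rw [intervalIntegral.integral_const, smul_eq_mul] at hle
    linarith
  · have hmem : ∀ τ ∈ Set.Icc (S b) (S a), τ ∈ Set.range S := by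
      intro τ hτ
      exact uIcc_sub_range hmono hcont a b (by rw [Set.uIcc_of_ge hab]; exact hτ)
    have hae : pseudoInv S ≤ᵐ[volume.restrict (Set.Icc (S b) (S a))] (fun _ => a) := by
      rw [Filter.EventuallyLE, ae_restrict_iff' measurableSet_Icc]
      filter_upwards [hae_ne] with τ hτne hτmem
      exact pinv_le hmono (lt_of_le_of_ne hτmem.2 hτne) (hmem τ hτmem)
    have hle := intervalIntegral.integral_mono_ae_restrict hab
      (pinv_intInt hmono hcont b a) (intervalIntegrable_const (c := a)) hae
    rw [intervalIntegral.integral_const, smul_eq_mul] at hle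
    rw [intervalIntegral.integral_symm]
    linarith
end

section
/- Assume in addition that 0 ≤ S(z) ≤ 1 for all z ∈ ℝ. Then there exist constants K₀ > 0 and K₁, K₂ ≥ 0, depending only on the Lipschitz constant of S (and in particular not on r), such that for every r ∈ ℝ: K₀·S(r)² − K₁ ≤ B(S(r)) ≤ K₂·r². -/
open MeasureTheory
open scoped Classical

lemma integral_bounds (L : NNReal) (S : ℝ → ℝ) (hmono : Monotone S)
    (hLip : LipschitzWith L S) (r : ℝ) :
    0 ≤ (∫ τ in (S 0)..(S r), pseudoInv S τ) ∧
    (∫ τ in (S 0)..(S r), pseudoInv S τ) ≤ (L : ℝ) * r ^ 2 := by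
  have hcont : Continuous S := hLip.continuous
  have hdist : |S r - S 0| ≤ (L : ℝ) * |r| := by
    have := hLip.dist_le_mul r 0
    simpa [Real.dist_eq] using this
  rcases lt_trichotomy (S 0) (S r) with hB | hB | hB
  · -- S 0 < S r, so r > 0
    have hr : 0 < r := by
      by_contra h
      push_neg at h
      exact absurd (hmono h) (not_le_of_gt hB)
    have hbound : ∀ τ ∈ Set.Icc (S 0) (S r), 0 ≤ pseudoInv S τ ∧ pseudoInv S τ ≤ r := by
      intro τ hτ
      rcases eq_or_lt_of_le hτ.1 with h0 | h0
      · simp [pseudoInv, ← h0, hr.le]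
      · have hIV : τ ∈ S '' Set.Icc 0 r :=
          intermediate_value_Icc hr.le hcont.continuousOn ⟨hτ.1, hτ.2⟩
        obtain ⟨z₀, hz₀, hz₀S⟩ := hIV
        have hlb : ∀ z ∈ {z : ℝ | S z = τ}, (0:ℝ) ≤ z := by
          intro z hz
          by_contra h
          push_neg at h
          have := hmono h.le
          rw [hz] at this
          exact absurd this (not_le_of_gt h0)
        have hbdd : BddBelow {z : ℝ | S z = τ} := ⟨0, hlb⟩
        have hmem : z₀ ∈ {z : ℝ | S z = τ} := hz₀S
        rw [pseudoInv, if_pos h0]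
        exact ⟨le_csInf ⟨z₀, hmem⟩ hlb, (csInf_le hbdd hmem).trans hz₀.2⟩
    by_cases hInt : IntervalIntegrable (pseudoInv S) volume (S 0) (S r)
    · have h1 : 0 ≤ ∫ τ in (S 0)..(S r), pseudoInv S τ :=
        intervalIntegral.integral_nonneg hB.le (fun u hu => (hbound u hu).1)
      have h2 : (∫ τ in (S 0)..(S r), pseudoInv S τ) ≤ ∫ _ in (S 0)..(S r), r :=
        intervalIntegral.integral_mono_on hB.le hInt intervalIntegrable_const
          (fun u hu => (hbound u hu).2)
      rw [intervalIntegral.integral_const, smul_eq_mul] at h2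
      have h3 : S r - S 0 ≤ (L : ℝ) * r := by
        rw [abs_of_pos hr] at hdist
        calc S r - S 0 ≤ |S r - S 0| := le_abs_self _
          _ ≤ (L : ℝ) * r := hdist
      refine ⟨h1, h2.trans ?_⟩
      nlinarith [hr.le]
    · rw [intervalIntegral.integral_undef hInt]
      exact ⟨le_refl 0, by positivity⟩
  · simp [← hB]
    positivity
  · -- S r < S 0, so r < 0
    have hr : r < 0 := by
      by_contra h
      push_neg at h
      exact absurd (hmono h) (not_le_of_gt hB)
    have hbound : ∀ τ ∈ Set.Icc (S r) (S 0), r ≤ pseudoInv S τ ∧ pseudoInv S τ ≤ 0 := by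
      intro τ hτ
      rcases eq_or_lt_of_le hτ.2 with h0 | h0
      · simp [pseudoInv, h0, hr.le]
      · have hIV : τ ∈ S '' Set.Icc r 0 :=
          intermediate_value_Icc hr.le hcont.continuousOn ⟨hτ.1, hτ.2⟩
        obtain ⟨z₀, hz₀, hz₀S⟩ := hIV
        have hub : ∀ z ∈ {z : ℝ | S z = τ}, z ≤ (0:ℝ) := by
          intro z hz
          by_contra h
          push_neg at h
          have := hmono h.le
          rw [hz] at this
          exact absurd this (not_le_of_gt h0)
        have hbdd : BddAbove {z : ℝ | S z = τ} := ⟨0, hub⟩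
        have hmem : z₀ ∈ {z : ℝ | S z = τ} := hz₀S
        rw [pseudoInv, if_neg (not_lt_of_gt h0), if_neg (ne_of_lt h0)]
        exact ⟨hz₀.1.trans (le_csSup hbdd hmem), csSup_le ⟨z₀, hmem⟩ hub⟩
    by_cases hInt : IntervalIntegrable (pseudoInv S) volume (S r) (S 0)
    · have h1 : (∫ τ in (S r)..(S 0), pseudoInv S τ) ≤ 0 := by
        have h := intervalIntegral.integral_mono_on hB.le hInt
          (intervalIntegrable_const (c := (0:ℝ))) (fun u hu => (hbound u hu).2)
        simpa using h
      have h2 : (∫ _ in (S r)..(S 0), r) ≤ ∫ τ in (S r)..(S 0), pseudoInv S τ :=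
        intervalIntegral.integral_mono_on hB.le intervalIntegrable_const hInt
          (fun u hu => (hbound u hu).1)
      rw [intervalIntegral.integral_const, smul_eq_mul] at h2
      have hsymm : (∫ τ in (S 0)..(S r), pseudoInv S τ)
          = -∫ τ in (S r)..(S 0), pseudoInv S τ :=
        intervalIntegral.integral_symm (S r) (S 0)
      have h3 : S 0 - S r ≤ (L : ℝ) * (-r) := by
        rw [abs_of_neg hr] at hdist
        calc S 0 - S r = -(S r - S 0) := by ring
          _ ≤ |S r - S 0| := neg_le_abs _
          _ ≤ (L : ℝ) * (-r) := hdist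
      constructor
      · rw [hsymm]; linarith
      · rw [hsymm]
        nlinarith [hr.le]
    · have : ¬ IntervalIntegrable (pseudoInv S) volume (S 0) (S r) := fun h => hInt h.symm
      rw [intervalIntegral.integral_undef this]
      exact ⟨le_refl 0, by positivity⟩

/-- If moreover `0 ≤ S ≤ 1`, then there are constants `K₀ > 0` and `K₁, K₂ ≥ 0`,
depending only on the Lipschitz constant `L` of `S`, such that for every `r`,
`K₀·S(r)² − K₁ ≤ B(S(r)) ≤ K₂·r²`. -/
theorem Bfun_quadratic_bounds (L : NNReal) :
    ∃ K₀ K₁ K₂ : ℝ, 0 < K₀ ∧ 0 ≤ K₁ ∧ 0 ≤ K₂ ∧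
      ∀ S : ℝ → ℝ, Monotone S → LipschitzWith L S → (∀ z, 0 ≤ S z ∧ S z ≤ 1) →
        ∀ r : ℝ,
          ((K₀ * (S r) ^ 2 - K₁ : ℝ) : EReal) ≤ Bfun S (S r) ∧
          Bfun S (S r) ≤ ((K₂ * r ^ 2 : ℝ) : EReal) := by
  refine ⟨1, 1, (L : ℝ), one_pos, zero_le_one, L.coe_nonneg, ?_⟩
  intro S hmono hLip hrange r
  obtain ⟨h1, h2⟩ := integral_bounds L S hmono hLip r
  have hmem : S r ∈ Set.range S := ⟨r, rfl⟩
  have hBfun : Bfun S (S r) = ((∫ τ in (S 0)..(S r), pseudoInv S τ : ℝ) : EReal) := by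
    rw [Bfun, if_pos hmem]
  rw [hBfun]
  constructor
  · rw [EReal.coe_le_coe_iff]
    have := (hrange r).1
    have := (hrange r).2
    nlinarith
  · rw [EReal.coe_le_coe_iff]
    exact h2
end

section
/- For any finite sequence of real numbers p₀, p₁, …, p_{k+1} one has the discrete chain-rule inequality: Σ_{n=0}^{k} (S(p_{n+1}) − S(p_n))·p_{n+1} ≥ B(S(p_{k+1})) − B(S(p₀)). -/
open MeasureTheory
open scoped Classical

section Aux

variable {S : ℝ → ℝ}

lemma bddBelow_level (hmono : Monotone S) {q : ℝ} (hq : S 0 < q) :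
    BddBelow {z : ℝ | S z = q} :=
  ⟨0, fun z hz => le_of_not_gt fun h => by
    have := hmono h.le
    simp only [Set.mem_setOf_eq] at hz
    linarith⟩

lemma bddAbove_level (hmono : Monotone S) {q : ℝ} (hq : q < S 0) :
    BddAbove {z : ℝ | S z = q} :=
  ⟨0, fun z hz => le_of_not_gt fun h => by
    have := hmono h.le
    simp only [Set.mem_setOf_eq] at hz
    linarith⟩

lemma pseudoInv_monoOn (hmono : Monotone S) :
    MonotoneOn (pseudoInv S) (Set.range S) := by
  intro q1 hq1 q2 hq2 h12
  rcases h12.eq_or_lt with rfl | hlt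
  · exact le_refl _
  obtain ⟨w1, hw1⟩ := hq1
  obtain ⟨w2, hw2⟩ := hq2
  by_cases h1 : S 0 < q1
  · have h2 : S 0 < q2 := h1.trans hlt
    simp only [pseudoInv, if_pos h1, if_pos h2]
    refine le_csInf ⟨w2, hw2⟩ fun z hz => ?_
    simp only [Set.mem_setOf_eq] at hz
    have hwz : w1 ≤ z := le_of_not_gt fun h => by have := hmono h.le; linarith
    exact (csInf_le (bddBelow_level hmono h1) hw1).trans hwz
  by_cases h1' : q1 = S 0
  · have h2 : S 0 < q2 := h1' ▸ hlt
    simp only [pseudoInv, if_neg h1, if_pos h1', if_pos h2]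
    refine le_csInf ⟨w2, hw2⟩ fun z hz => ?_
    simp only [Set.mem_setOf_eq] at hz
    exact le_of_not_gt fun h => by have := hmono h.le; linarith
  have h1lt : q1 < S 0 := lt_of_le_of_ne (not_lt.1 h1) h1'
  have hs1 : sSup {z : ℝ | S z = q1} ≤ 0 := by
    refine csSup_le ⟨w1, hw1⟩ fun z hz => ?_
    simp only [Set.mem_setOf_eq] at hz
    exact le_of_not_gt fun h => by have := hmono h.le; linarith
  by_cases h2 : S 0 < q2
  · simp only [pseudoInv, if_neg h1, if_neg h1', if_pos h2]
    have hs2 : (0:ℝ) ≤ sInf {z : ℝ | S z = q2} := by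
      refine le_csInf ⟨w2, hw2⟩ fun z hz => ?_
      simp only [Set.mem_setOf_eq] at hz
      exact le_of_not_gt fun h => by have := hmono h.le; linarith
    linarith
  by_cases h2' : q2 = S 0
  · simp only [pseudoInv, if_neg h1, if_neg h1', if_neg h2, if_pos h2']
    exact hs1
  have h2lt : q2 < S 0 := lt_of_le_of_ne (not_lt.1 h2) h2'
  simp only [pseudoInv, if_neg h1, if_neg h1', if_neg h2, if_neg h2']
  refine csSup_le ⟨w1, hw1⟩ fun z hz => ?_
  simp only [Set.mem_setOf_eq] at hz
  have : z ≤ w2 := le_of_not_gt fun h => by have := hmono h.le; linarith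
  exact this.trans (le_csSup (bddAbove_level hmono h2lt) hw2)

lemma uIcc_subset_range (hcont : Continuous S) (a b : ℝ) :
    Set.uIcc (S a) (S b) ⊆ Set.range S := fun τ hτ => by
  obtain ⟨z, _, hz⟩ := intermediate_value_uIcc hcont.continuousOn hτ
  exact ⟨z, hz⟩

lemma pseudoInv_intInt (hmono : Monotone S) (hcont : Continuous S) (x y : ℝ) :
    IntervalIntegrable (pseudoInv S) volume (S x) (S y) :=
  ((pseudoInv_monoOn hmono).mono (uIcc_subset_range hcont x y)).intervalIntegrable

lemma step_integral (hmono : Monotone S) (hcont : Continuous S) (a b : ℝ) :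
    ∫ τ in (S a)..(S b), pseudoInv S τ ≤ (S b - S a) * b := by
  have h0 : ∀ᵐ τ : ℝ, τ ≠ S 0 ∧ τ ≠ S b := by
    rw [Filter.eventually_iff, mem_ae_iff]
    refine measure_mono_null (fun τ hτ => ?_)
      (Set.Finite.measure_zero (Set.toFinite ({S 0, S b} : Set ℝ)) volume)
    simp at hτ ⊢
    tauto
  rcases le_or_gt (S a) (S b) with hab | hab
  · calc ∫ τ in (S a)..(S b), pseudoInv S τ ≤ ∫ _ in (S a)..(S b), b := by
          refine intervalIntegral.integral_mono_ae_restrict hab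
            (pseudoInv_intInt hmono hcont a b) intervalIntegrable_const ?_
          filter_upwards [ae_restrict_mem measurableSet_Icc, ae_restrict_of_ae h0]
            with τ hmem hne
          have hτb : τ < S b := lt_of_le_of_ne hmem.2 hne.2
          have hτu : τ ∈ Set.uIcc (S a) (S b) := by
            rw [Set.uIcc_of_le hab]; exact hmem
          obtain ⟨z, _, hz⟩ := intermediate_value_uIcc hcont.continuousOn hτu
          have hzb : z ≤ b := le_of_not_gt fun h => by have := hmono h.le; linarith
          by_cases hq : S 0 < τ
          · rw [pseudoInv, if_pos hq]
            exact (csInf_le (bddBelow_level hmono hq) hz).trans hzb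
          · have hq' : τ < S 0 := lt_of_le_of_ne (not_lt.1 hq) hne.1
            rw [pseudoInv, if_neg hq, if_neg hne.1]
            refine csSup_le ⟨z, hz⟩ fun w hw => ?_
            simp only [Set.mem_setOf_eq] at hw
            exact le_of_not_gt fun h => by have := hmono h.le; linarith
      _ = (S b - S a) * b := by rw [intervalIntegral.integral_const, smul_eq_mul]
  · rw [intervalIntegral.integral_symm]
    have key : (S a - S b) * b ≤ ∫ τ in (S b)..(S a), pseudoInv S τ := by
      calc (S a - S b) * b = ∫ _ in (S b)..(S a), b := by
            rw [intervalIntegral.integral_const, smul_eq_mul]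
        _ ≤ ∫ τ in (S b)..(S a), pseudoInv S τ := by
          refine intervalIntegral.integral_mono_ae_restrict hab.le
            intervalIntegrable_const (pseudoInv_intInt hmono hcont b a) ?_
          filter_upwards [ae_restrict_mem measurableSet_Icc, ae_restrict_of_ae h0]
            with τ hmem hne
          have hτb : S b < τ := lt_of_le_of_ne hmem.1 (Ne.symm hne.2)
          have hτu : τ ∈ Set.uIcc (S b) (S a) := by
            rw [Set.uIcc_of_le hab.le]; exact hmem
          obtain ⟨z, _, hz⟩ := intermediate_value_uIcc hcont.continuousOn hτu
          have hzb : b ≤ z := le_of_not_gt fun h => by have := hmono h.le; linarith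
          by_cases hq : S 0 < τ
          · rw [pseudoInv, if_pos hq]
            refine le_csInf ⟨z, hz⟩ fun w hw => ?_
            simp only [Set.mem_setOf_eq] at hw
            exact le_of_not_gt fun h => by have := hmono h.le; linarith
          · have hq' : τ < S 0 := lt_of_le_of_ne (not_lt.1 hq) hne.1
            rw [pseudoInv, if_neg hq, if_neg hne.1]
            exact hzb.trans (le_csSup (bddAbove_level hmono hq') hz)
    linarith

end Aux

/-- Discrete chain-rule inequality: for any finite sequence `p₀, …, p_{k+1}`,
`Σ_{n=0}^{k} (S(p_{n+1}) − S(p_n))·p_{n+1} ≥ B(S(p_{k+1})) − B(S(p₀))`. -/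
theorem Bfun_discrete_chain_rule (S : ℝ → ℝ) (L : NNReal)
    (hmono : Monotone S) (hlip : LipschitzWith L S) (k : ℕ) (p : ℕ → ℝ) :
    Bfun S (S (p (k + 1))) - Bfun S (S (p 0)) ≤
      ((∑ n ∈ Finset.range (k + 1), (S (p (n + 1)) - S (p n)) * p (n + 1) : ℝ) : EReal) := by
  have hcont : Continuous S := hlip.continuous
  set F : ℕ → ℝ := fun n => ∫ τ in (S 0)..(S (p n)), pseudoInv S τ with hF
  have hBeq : ∀ n, Bfun S (S (p n)) = ((F n : ℝ) : EReal) := fun n => by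
    rw [Bfun, if_pos ⟨p n, rfl⟩]
  rw [hBeq, hBeq, ← EReal.coe_sub, EReal.coe_le_coe_iff]
  rw [← Finset.sum_range_sub F (k + 1)]
  refine Finset.sum_le_sum fun n _ => ?_
  have := intervalIntegral.integral_interval_sub_left
    (pseudoInv_intInt hmono hcont 0 (p (n + 1))) (pseudoInv_intInt hmono hcont 0 (p n))
  calc F (n + 1) - F n = ∫ τ in (S (p n))..(S (p (n + 1))), pseudoInv S τ := this
    _ ≤ _ := step_integral hmono hcont (p n) (p (n + 1))
end

section
/- Let (X, μ) be a finite measure space and 0 < k_min ≤ k_max. Let (a_l)_{l∈ℕ} and (b_l)_{l∈ℕ} be sequences of measurable functions from X to [k_min, k_max] converging in L²(X, μ) to measurable functions a and b respectively, and let (β_l)_{l∈ℕ} ⊂ L²(X, μ) converge strongly in L²(X, μ) to β. Then the sequence a_l·β_l⁺ − b_l·β_l⁻ converges strongly in L²(X, μ) to a·β⁺ − b·β⁻. -/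
open MeasureTheory Filter Topology ENNReal

lemma key_mul_tendsto {X : Type*} [MeasurableSpace X] {μ : Measure X}
    (c : ℕ → X → ℝ) (C : X → ℝ) (g : X → ℝ)
    (hc : ∀ l, AEStronglyMeasurable (c l) μ) (hC : AEStronglyMeasurable C μ)
    (hg : MemLp g 2 μ) (M : ℝ)
    (hM0 : 0 ≤ M) (hM : ∀ l x, |c l x| ≤ M)
    (hconv : Tendsto (fun l => eLpNorm (c l - C) 2 μ) atTop (𝓝 0)) :
    Tendsto (fun l => eLpNorm (fun x => (c l x - C x) * g x) 2 μ) atTop (𝓝 0) := by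
  have hgm : AEStronglyMeasurable g μ := hg.1
  have hmeas : TendstoInMeasure μ c atTop C :=
    tendstoInMeasure_of_tendsto_eLpNorm (p := 2) two_ne_zero hc hC hconv
  apply tendsto_of_subseq_tendsto
  intro ns hns
  have hmeas' : TendstoInMeasure μ (fun k => c (ns k)) atTop C := fun ε hε =>
    (hmeas ε hε).comp hns
  obtain ⟨ms, -, hae⟩ := hmeas'.exists_seq_tendsto_ae
  refine ⟨ms, ?_⟩
  set d : ℕ → ℕ := fun k => ns (ms k) with hd
  -- pointwise a.e. convergence of products to 0
  have hCb : ∀ᵐ x ∂μ, |C x| ≤ M :=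
    hae.mono fun x hx =>
      le_of_tendsto ((continuous_abs.tendsto _).comp hx) (Eventually.of_forall fun k => hM _ x)
  -- express eLpNorm via lintegral
  have hrepr : ∀ (f : X → ℝ),
      eLpNorm f 2 μ = (∫⁻ x, (‖f x‖₊ : ℝ≥0∞) ^ (2 : ℝ) ∂μ) ^ (1 / 2 : ℝ) := by
    intro f
    rw [eLpNorm_eq_lintegral_rpow_enorm_toReal two_ne_zero ENNReal.ofNat_ne_top]
    norm_num
    rfl
  have hglt : (∫⁻ x, (‖g x‖₊ : ℝ≥0∞) ^ (2 : ℝ) ∂μ) < ∞ := by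
    have := lintegral_rpow_enorm_lt_top_of_eLpNorm_lt_top (f := g)
      two_ne_zero ENNReal.ofNat_ne_top hg.2
    simp only [ENNReal.toReal_ofNat] at this; exact this
  -- the lintegral of squares tends to 0
  have hlint : Tendsto
      (fun k => ∫⁻ x, (‖(c (d k) x - C x) * g x‖₊ : ℝ≥0∞) ^ (2 : ℝ) ∂μ) atTop (𝓝 0) := by
    have h0 : (0 : ℝ≥0∞) = ∫⁻ _, (0 : ℝ≥0∞) ∂μ := by simp
    rw [h0]
    apply tendsto_lintegral_of_dominated_convergence'
      (bound := fun x => (ENNReal.ofReal (2 * M)) ^ (2:ℝ) * (‖g x‖₊ : ℝ≥0∞) ^ (2 : ℝ))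
    · intro k
      have : AEStronglyMeasurable (fun x => (c (d k) x - C x) * g x) μ :=
        ((hc _).sub hC).mul hgm
      exact this.aemeasurable.enorm.pow_const _
    · intro k
      filter_upwards [hCb] with x hx
      have h1 : ‖(c (d k) x - C x) * g x‖ ≤ (2 * M) * ‖g x‖ := by
        rw [norm_mul]
        apply mul_le_mul_of_nonneg_right _ (norm_nonneg _)
        calc ‖c (d k) x - C x‖ ≤ |c (d k) x| + |C x| := abs_sub _ _
          _ ≤ M + M := add_le_add (hM _ _) hx
          _ = 2 * M := by ring
      have h2 : (‖(c (d k) x - C x) * g x‖₊ : ℝ≥0∞) ≤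
          ENNReal.ofReal (2 * M) * (‖g x‖₊ : ℝ≥0∞) := by
        rw [← enorm_eq_nnnorm, ← enorm_eq_nnnorm, ← ofReal_norm, ← ofReal_norm,
          ← ENNReal.ofReal_mul (by linarith)]
        exact ENNReal.ofReal_le_ofReal h1
      calc (‖(c (d k) x - C x) * g x‖₊ : ℝ≥0∞) ^ (2 : ℝ)
          ≤ (ENNReal.ofReal (2 * M) * (‖g x‖₊ : ℝ≥0∞)) ^ (2 : ℝ) :=
            ENNReal.rpow_le_rpow h2 (by norm_num)
        _ = (ENNReal.ofReal (2 * M)) ^ (2:ℝ) * (‖g x‖₊ : ℝ≥0∞) ^ (2 : ℝ) :=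
            ENNReal.mul_rpow_of_nonneg _ _ (by norm_num)
    · have hconst : (ENNReal.ofReal (2 * M)) ^ (2:ℝ) ≠ ∞ :=
        ENNReal.rpow_ne_top_of_nonneg (by norm_num) ENNReal.ofReal_ne_top
      rw [lintegral_const_mul' _ _ hconst]
      exact ENNReal.mul_ne_top hconst hglt.ne
    · filter_upwards [hae] with x hx
      have h1 : Tendsto (fun k => (c (d k) x - C x) * g x) atTop (𝓝 0) := by
        have := (hx.sub_const (C x)).mul_const (g x)
        simpa using this
      have hcont : Continuous (fun t : ℝ => ((‖t‖₊ : ℝ≥0∞)) ^ (2 : ℝ)) :=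
        (ENNReal.continuous_rpow_const).comp (ENNReal.continuous_coe.comp continuous_nnnorm)
      have h2 := (hcont.tendsto 0).comp h1
      have h3 : ((‖(0:ℝ)‖₊ : ℝ≥0∞)) ^ (2:ℝ) = 0 := by
        rw [nnnorm_zero, ENNReal.coe_zero, ENNReal.zero_rpow_of_pos (by norm_num)]
      simpa [Function.comp_def, h3] using h2
  -- conclude
  have hcont2 : Continuous (fun t : ℝ≥0∞ => t ^ (1 / 2 : ℝ)) := ENNReal.continuous_rpow_const
  have := (hcont2.tendsto 0).comp hlint
  simp only [Function.comp_def] at this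
  have h02 : (0 : ℝ≥0∞) ^ (1 / 2 : ℝ) = 0 := by
    rw [ENNReal.zero_rpow_of_pos]; norm_num
  rw [h02] at this
  convert this using 2 with k
  exact hrepr _


/-- If `a_l, b_l : X → [k_min, k_max]` converge in `L²(X,μ)` to `a, b`, and `β_l → β`
strongly in `L²(X,μ)` (with `μ` a finite measure), then `a_l·β_l⁺ − b_l·β_l⁻` converges
strongly in `L²(X,μ)` to `a·β⁺ − b·β⁻`. -/
theorem upwind_flux_L2_convergence
    {X : Type*} [MeasurableSpace X] (μ : Measure X) [IsFiniteMeasure μ]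
    (kmin kmax : ℝ) (hkmin : 0 < kmin) (hk : kmin ≤ kmax)
    (a b : ℕ → X → ℝ) (A B : X → ℝ) (β : ℕ → X → ℝ) (βlim : X → ℝ)
    (ha : ∀ l, Measurable (a l)) (hb : ∀ l, Measurable (b l))
    (hA : Measurable A) (hB : Measurable B)
    (ha_range : ∀ l x, a l x ∈ Set.Icc kmin kmax)
    (hb_range : ∀ l x, b l x ∈ Set.Icc kmin kmax)
    (hβ : ∀ l, MemLp (β l) 2 μ) (hβlim : MemLp βlim 2 μ)
    (ha_conv : Tendsto (fun l => eLpNorm (a l - A) 2 μ) atTop (𝓝 0))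
    (hb_conv : Tendsto (fun l => eLpNorm (b l - B) 2 μ) atTop (𝓝 0))
    (hβ_conv : Tendsto (fun l => eLpNorm (β l - βlim) 2 μ) atTop (𝓝 0)) :
    Tendsto (fun l => eLpNorm
        ((fun x => a l x * max (β l x) 0 - b l x * max (-(β l x)) 0) -
          fun x => A x * max (βlim x) 0 - B x * max (-(βlim x)) 0) 2 μ)
      atTop (𝓝 0) := by
  have hkmax : (0:ℝ) < kmax := lt_of_lt_of_le hkmin hk
  have ha_abs : ∀ l x, |a l x| ≤ kmax := fun l x =>
    abs_le.2 ⟨by linarith [(ha_range l x).1], (ha_range l x).2⟩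
  have hb_abs : ∀ l x, |b l x| ≤ kmax := fun l x =>
    abs_le.2 ⟨by linarith [(hb_range l x).1], (hb_range l x).2⟩
  -- measurability of the pieces
  have asm_posl : ∀ l, AEStronglyMeasurable (fun x => max (β l x) 0) μ :=
    fun l => ((hβ l).pos_part).1
  have asm_negl : ∀ l, AEStronglyMeasurable (fun x => max (-(β l x)) 0) μ :=
    fun l => ((hβ l).neg_part).1
  have asm_pos : AEStronglyMeasurable (fun x => max (βlim x) 0) μ := hβlim.pos_part.1
  have asm_neg : AEStronglyMeasurable (fun x => max (-(βlim x)) 0) μ := hβlim.neg_part.1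
  set g1 : ℕ → X → ℝ := fun l x => a l x * (max (β l x) 0 - max (βlim x) 0) with hg1
  set g2 : ℕ → X → ℝ := fun l x => (a l x - A x) * max (βlim x) 0 with hg2
  set g3 : ℕ → X → ℝ := fun l x => b l x * (max (-(β l x)) 0 - max (-(βlim x)) 0) with hg3
  set g4 : ℕ → X → ℝ := fun l x => (b l x - B x) * max (-(βlim x)) 0 with hg4
  have m1 : ∀ l, AEStronglyMeasurable (g1 l) μ := fun l =>
    (ha l).aestronglyMeasurable.mul ((asm_posl l).sub asm_pos)
  have m2 : ∀ l, AEStronglyMeasurable (g2 l) μ := fun l =>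
    ((ha l).aestronglyMeasurable.sub hA.aestronglyMeasurable).mul asm_pos
  have m3 : ∀ l, AEStronglyMeasurable (g3 l) μ := fun l =>
    (hb l).aestronglyMeasurable.mul ((asm_negl l).sub asm_neg)
  have m4 : ∀ l, AEStronglyMeasurable (g4 l) μ := fun l =>
    ((hb l).aestronglyMeasurable.sub hB.aestronglyMeasurable).mul asm_neg
  -- decomposition of the difference
  have hdiff : ∀ l, ((fun x => a l x * max (β l x) 0 - b l x * max (-(β l x)) 0) -
          fun x => A x * max (βlim x) 0 - B x * max (-(βlim x)) 0)
      = (g1 l + g2 l) - (g3 l + g4 l) := by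
    intro l
    funext x
    simp only [Pi.sub_apply, Pi.add_apply, hg1, hg2, hg3, hg4]
    ring
  -- bounds for g1 and g3
  have hbound1 : ∀ l, eLpNorm (g1 l) 2 μ ≤
      (‖kmax‖₊ : ℝ≥0∞) * eLpNorm (β l - βlim) 2 μ := by
    intro l
    rw [← enorm_eq_nnnorm, ← eLpNorm_const_smul kmax (β l - βlim) 2 μ]
    apply eLpNorm_mono
    intro x
    simp only [Pi.smul_apply, Pi.sub_apply, smul_eq_mul, norm_mul, Real.norm_eq_abs, hg1]
    calc |a l x| * |max (β l x) 0 - max (βlim x) 0|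
        ≤ kmax * |β l x - βlim x| :=
          mul_le_mul (ha_abs l x) (abs_max_sub_max_le_abs _ _ _) (abs_nonneg _) hkmax.le
      _ ≤ |kmax| * |β l x - βlim x| := by
          rw [abs_of_pos hkmax]
  have hbound3 : ∀ l, eLpNorm (g3 l) 2 μ ≤
      (‖kmax‖₊ : ℝ≥0∞) * eLpNorm (β l - βlim) 2 μ := by
    intro l
    rw [← enorm_eq_nnnorm, ← eLpNorm_const_smul kmax (β l - βlim) 2 μ]
    apply eLpNorm_mono
    intro x
    simp only [Pi.smul_apply, Pi.sub_apply, smul_eq_mul, norm_mul, Real.norm_eq_abs, hg3]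
    calc |b l x| * |max (-(β l x)) 0 - max (-(βlim x)) 0|
        ≤ kmax * |β l x - βlim x| := by
          refine mul_le_mul (hb_abs l x) ?_ (abs_nonneg _) hkmax.le
          have h := abs_max_sub_max_le_abs (-(β l x)) (-(βlim x)) 0
          have e : |(-(β l x)) - (-(βlim x))| = |β l x - βlim x| := by
            rw [neg_sub_neg, abs_sub_comm]
          rwa [e] at h
      _ ≤ |kmax| * |β l x - βlim x| := by
          rw [abs_of_pos hkmax]
  -- convergence of the four pieces
  have t2 : Tendsto (fun l => eLpNorm (g2 l) 2 μ) atTop (𝓝 0) :=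
    key_mul_tendsto a A (fun x => max (βlim x) 0)
      (fun l => (ha l).aestronglyMeasurable) hA.aestronglyMeasurable
      hβlim.pos_part kmax hkmax.le ha_abs ha_conv
  have t4 : Tendsto (fun l => eLpNorm (g4 l) 2 μ) atTop (𝓝 0) :=
    key_mul_tendsto b B (fun x => max (-(βlim x)) 0)
      (fun l => (hb l).aestronglyMeasurable) hB.aestronglyMeasurable
      hβlim.neg_part kmax hkmax.le hb_abs hb_conv
  have tc : Tendsto (fun l => (‖kmax‖₊ : ℝ≥0∞) * eLpNorm (β l - βlim) 2 μ) atTop (𝓝 0) := by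
    have := ENNReal.Tendsto.const_mul (a := (‖kmax‖₊ : ℝ≥0∞)) hβ_conv
      (Or.inr ENNReal.coe_ne_top)
    simpa using this
  -- assemble
  have hT : Tendsto (fun l => ((‖kmax‖₊ : ℝ≥0∞) * eLpNorm (β l - βlim) 2 μ + eLpNorm (g2 l) 2 μ)
      + ((‖kmax‖₊ : ℝ≥0∞) * eLpNorm (β l - βlim) 2 μ + eLpNorm (g4 l) 2 μ)) atTop (𝓝 0) := by
    have := (tc.add t2).add (tc.add t4)
    simpa using this
  refine tendsto_of_tendsto_of_tendsto_of_le_of_le tendsto_const_nhds hT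
    (fun l => zero_le) ?_
  intro l
  dsimp only
  rw [hdiff l]
  calc eLpNorm ((g1 l + g2 l) - (g3 l + g4 l)) 2 μ
      ≤ eLpNorm (g1 l + g2 l) 2 μ + eLpNorm (g3 l + g4 l) 2 μ :=
        eLpNorm_sub_le ((m1 l).add (m2 l)) ((m3 l).add (m4 l)) one_le_two
    _ ≤ (eLpNorm (g1 l) 2 μ + eLpNorm (g2 l) 2 μ) +
        (eLpNorm (g3 l) 2 μ + eLpNorm (g4 l) 2 μ) :=
        add_le_add (eLpNorm_add_le (m1 l) (m2 l) one_le_two)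
          (eLpNorm_add_le (m3 l) (m4 l) one_le_two)
    _ ≤ ((‖kmax‖₊ : ℝ≥0∞) * eLpNorm (β l - βlim) 2 μ + eLpNorm (g2 l) 2 μ)
      + ((‖kmax‖₊ : ℝ≥0∞) * eLpNorm (β l - βlim) 2 μ + eLpNorm (g4 l) 2 μ) :=
        add_le_add (add_le_add (hbound1 l) le_rfl) (add_le_add (hbound3 l) le_rfl)
end

section
/- Discontinuous weak-L² Ascoli–Arzelà theorem: Let A be a measurable subset of ℝⁿ endowed with the Lebesgue measure, let 𝓡 be a dense subset of L²(A), and let T > 0. Let (v_m)_{m∈ℕ} be a sequence of functions [0,T] → L²(A) such that (a) sup_{m∈ℕ} sup_{t∈[0,T]} ‖v_m(t)‖_{L²(A)} < +∞, and (b) for every φ ∈ 𝓡 there exist a function ω_φ : [0,T]² → [0,∞) with ω_φ(s,t) → 0 as |s − t| → 0 (uniformly over pairs (s,t)), and a sequence (δ_m(φ))_{m∈ℕ} ⊂ [0,∞) with δ_m(φ) → 0 as m → ∞, such that |⟨v_m(s) − v_m(t), φ⟩_{L²(A)}| ≤ δ_m(φ) + ω_φ(s,t) for all (s,t) ∈ [0,T]²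 and all m ∈ ℕ. Then there exist a function v : [0,T] → L²(A) and a subsequence of (v_m)_{m∈ℕ} that converges to v uniformly on [0,T] weakly in L²(A); moreover v is continuous from [0,T] into L²(A) equipped with its weak topology. -/
open MeasureTheory Filter Topology RealInnerProductSpace

/-- Discontinuous weak-`L²` Ascoli–Arzelà theorem: a sequence of functions from `[0,T]`
to `L²(A)` that is uniformly bounded and, against every element of a dense subset `𝓡`,
satisfies an approximate equicontinuity estimate `|⟨v_m(s) − v_m(t), φ⟩| ≤ δ_m(φ) + ω_φ(s,t)`,
has a subsequence converging uniformly on `[0,T]` weakly in `L²(A)` to a limit that is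
weakly continuous. -/
theorem discontinuous_weak_L2_AscoliArzela
    {n : ℕ} (A : Set (Fin n → ℝ)) (hA : MeasurableSet A)
    (𝓡 : Set (Lp ℝ 2 (volume.restrict A))) (h𝓡 : Dense 𝓡)
    (T : ℝ) (hT : 0 < T)
    (v : ℕ → ℝ → Lp ℝ 2 (volume.restrict A))
    (hbound : ∃ C : ℝ, ∀ m : ℕ, ∀ t ∈ Set.Icc (0 : ℝ) T, ‖v m t‖ ≤ C)
    (hequi : ∀ φ ∈ 𝓡, ∃ (ω : ℝ → ℝ → ℝ) (δ : ℕ → ℝ),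
      (∀ s t : ℝ, 0 ≤ ω s t) ∧ (∀ m, 0 ≤ δ m) ∧
      (∀ ε > (0 : ℝ), ∃ η > (0 : ℝ), ∀ s ∈ Set.Icc (0 : ℝ) T, ∀ t ∈ Set.Icc (0 : ℝ) T,
        |s - t| < η → ω s t < ε) ∧
      Tendsto δ atTop (𝓝 0) ∧
      (∀ s ∈ Set.Icc (0 : ℝ) T, ∀ t ∈ Set.Icc (0 : ℝ) T, ∀ m : ℕ,
        |⟪v m s - v m t, φ⟫| ≤ δ m + ω s t)) :
    ∃ (vlim : ℝ → Lp ℝ 2 (volume.restrict A)) (ψ : ℕ → ℕ), StrictMono ψ ∧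
      (∀ φ : Lp ℝ 2 (volume.restrict A),
        TendstoUniformlyOn (fun m t => (⟪v (ψ m) t, φ⟫ : ℝ))
          (fun t => (⟪vlim t, φ⟫ : ℝ)) atTop (Set.Icc 0 T)) ∧
      (∀ φ : Lp ℝ 2 (volume.restrict A),
        ContinuousOn (fun t => (⟪vlim t, φ⟫ : ℝ)) (Set.Icc 0 T)) := by
  classical
  haveI : Fact ((2 : ENNReal) ≠ ⊤) := ⟨by norm_num⟩
  haveI : SecondCountableTopology (Lp ℝ 2 (volume.restrict A)) := Lp.SecondCountableTopology
  haveI : Nonempty (Lp ℝ 2 (volume.restrict A)) := ⟨0⟩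
  obtain ⟨C₀, hC₀⟩ := hbound
  set C : ℝ := max C₀ 0 with hCdef
  have hC0 : (0:ℝ) ≤ C := le_max_right _ _
  have hC : ∀ m : ℕ, ∀ t ∈ Set.Icc (0:ℝ) T, ‖v m t‖ ≤ C :=
    fun m t ht => (hC₀ m t ht).trans (le_max_left _ _)
  have hinner : ∀ (m : ℕ) (t : ℝ), t ∈ Set.Icc (0:ℝ) T →
      ∀ φ : Lp ℝ 2 (volume.restrict A), |(⟪v m t, φ⟫ : ℝ)| ≤ C * ‖φ‖ := by
    intro m t ht φ
    exact (abs_real_inner_le_norm _ _).trans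
      (mul_le_mul_of_nonneg_right (hC m t ht) (norm_nonneg φ))
  -- a countable dense subset of `𝓡`
  obtain ⟨D, hD𝓡, hDc, hDd⟩ : ∃ D : Set (Lp ℝ 2 (volume.restrict A)),
      D ⊆ 𝓡 ∧ D.Countable ∧ Dense D := by
    have h1 : TopologicalSpace.IsSeparable 𝓡 :=
      TopologicalSpace.IsSeparable.of_separableSpace 𝓡
    haveI := h1.separableSpace
    obtain ⟨s, hsc, hsd⟩ := TopologicalSpace.exists_countable_dense ↥𝓡
    refine ⟨Subtype.val '' s, ?_, hsc.image _, ?_⟩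
    · rintro x ⟨y, -, rfl⟩; exact y.2
    · have hsub : 𝓡 ⊆ closure (Subtype.val '' s) := by
        intro x hx
        exact mem_closure_image continuous_subtype_val.continuousAt (hsd ⟨x, hx⟩)
      rw [dense_iff_closure_eq]
      have h2 := closure_mono hsub
      rw [closure_closure] at h2
      apply Set.eq_univ_of_univ_subset
      calc Set.univ = closure 𝓡 := h𝓡.closure_eq.symm
        _ ⊆ closure (Subtype.val '' s) := h2
  -- a countable dense subset of `[0, T]`
  set S : Set ℝ := Set.Icc 0 T ∩ Set.range ((↑) : ℚ → ℝ) with hSdef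
  have hSc : S.Countable := Set.Countable.mono Set.inter_subset_right (Set.countable_range _)
  have hSsub : S ⊆ Set.Icc 0 T := Set.inter_subset_left
  have hSdense : ∀ t ∈ Set.Icc (0:ℝ) T, ∀ η > (0:ℝ), ∃ q ∈ S, |t - q| < η := by
    intro t ht η hη
    obtain ⟨ht0, htT⟩ := ht
    have hat : max (t - η/2) 0 ≤ t := max_le (by linarith) ht0
    have htb : t ≤ min (t + η/2) T := le_min (by linarith) htT
    have hab : max (t - η/2) 0 < min (t + η/2) T := by
      rcases eq_or_lt_of_le ht0 with h0 | h0
      · have : t < min (t + η/2) T := lt_min (by linarith) (by linarith)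
        exact lt_of_le_of_lt hat this
      · exact lt_of_lt_of_le (max_lt (by linarith) h0) htb
    obtain ⟨q, hq1, hq2⟩ := exists_rat_btwn hab
    have ha0 : (0:ℝ) ≤ max (t - η/2) 0 := le_max_right _ _
    have haη : t - η/2 ≤ max (t - η/2) 0 := le_max_left _ _
    have hbT : min (t + η/2) T ≤ T := min_le_right _ _
    have hbη : min (t + η/2) T ≤ t + η/2 := min_le_left _ _
    refine ⟨(q:ℝ), ⟨⟨by linarith, by linarith⟩, ⟨q, rfl⟩⟩, ?_⟩
    rw [abs_lt]; constructor <;> linarith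
  -- diagonal extraction via sequential compactness of a countable product
  have hDne : D.Nonempty := hDd.nonempty
  have hSne : S.Nonempty := ⟨0, ⟨le_refl 0, le_of_lt hT⟩, ⟨0, by norm_num⟩⟩
  obtain ⟨e, he⟩ := (hDc.prod hSc).exists_surjective (hDne.prod hSne)
  set F : ℕ → ℕ → ℝ := fun m k => ⟪v m ((e k).1).2, ((e k).1).1⟫ with hFdef
  have heS : ∀ k, ((e k).1).2 ∈ Set.Icc (0:ℝ) T := fun k => hSsub (Set.mem_prod.mp (e k).2).2
  have hFK : ∀ m, F m ∈ Set.univ.pi fun k =>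
      Set.Icc (-(C * ‖((e k).1).1‖)) (C * ‖((e k).1).1‖) := by
    intro m k _
    have h := hinner m _ (heS k) ((e k).1).1
    rw [Set.mem_Icc]
    exact abs_le.mp h
  obtain ⟨g, -, ψ, hψ, hFtend⟩ :=
    ((isCompact_univ_pi fun k => isCompact_Icc).isSeqCompact :
      IsSeqCompact (Set.univ.pi fun k =>
        Set.Icc (-(C * ‖((e k).1).1‖)) (C * ‖((e k).1).1‖))) hFK
  rw [tendsto_pi_nhds] at hFtend
  have hqconv : ∀ d ∈ D, ∀ q ∈ S, ∃ L : ℝ,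
      Tendsto (fun m => (⟪v (ψ m) q, d⟫ : ℝ)) atTop (𝓝 L) := by
    intro d hd q hq
    obtain ⟨k, hk⟩ := he ⟨(d, q), Set.mem_prod.mpr ⟨hd, hq⟩⟩
    refine ⟨g k, ?_⟩
    have h2 := hFtend k
    have hval : (e k).1 = (d, q) := by rw [hk]
    simp only [Function.comp, hFdef, hval] at h2
    exact h2
  -- uniform (in t) Cauchy estimate against elements of D
  have hUC : ∀ d ∈ D, ∀ ε > (0:ℝ), ∃ N : ℕ, ∀ m ≥ N, ∀ j ≥ N, ∀ t ∈ Set.Icc (0:ℝ) T,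
      |(⟪v (ψ m) t, d⟫ : ℝ) - ⟪v (ψ j) t, d⟫| < ε := by
    intro d hd ε hε
    obtain ⟨ω, δ, hω0, hδ0, hωcont, hδlim, hineq⟩ := hequi d (hD𝓡 hd)
    have hε5 : (0:ℝ) < ε/5 := by linarith
    obtain ⟨η, hη, hωη⟩ := hωcont (ε/5) hε5
    have hcover : Set.Icc (0:ℝ) T ⊆ ⋃ q ∈ S, Metric.ball q η := by
      intro t ht
      obtain ⟨q, hq, hqt⟩ := hSdense t ht η hη
      exact Set.mem_biUnion hq (by rw [Metric.mem_ball, Real.dist_eq]; exact hqt)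
    obtain ⟨S₀, hS₀S, hS₀fin, hS₀cov⟩ := isCompact_Icc.elim_finite_subcover_image
      (fun q _ => Metric.isOpen_ball) hcover
    have hcau : ∀ q ∈ S₀, ∀ᶠ N : ℕ in atTop, ∀ m ≥ N, ∀ j ≥ N,
        |(⟪v (ψ m) q, d⟫ : ℝ) - ⟪v (ψ j) q, d⟫| < ε/5 := by
      intro q hq
      obtain ⟨L, hL⟩ := hqconv d hd q (hS₀S hq)
      obtain ⟨N, hN⟩ := Metric.cauchySeq_iff.mp hL.cauchySeq (ε/5) hε5
      refine eventually_atTop.mpr ⟨N, fun N' hN' m hm j hj => ?_⟩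
      have := hN m (le_trans hN' hm) j (le_trans hN' hj)
      rwa [Real.dist_eq] at this
    obtain ⟨N₁, hN₁⟩ := eventually_atTop.mp (hS₀fin.eventually_all.mpr hcau)
    have hδψ : Tendsto (fun m => δ (ψ m)) atTop (𝓝 0) := hδlim.comp hψ.tendsto_atTop
    obtain ⟨N₂, hN₂⟩ := eventually_atTop.mp (hδψ.eventually_lt_const hε5)
    refine ⟨max N₁ N₂, fun m hm j hj t ht => ?_⟩
    obtain ⟨q, hqS₀, hqt⟩ : ∃ q ∈ S₀, |t - q| < η := by
      obtain ⟨q, hq⟩ := Set.mem_iUnion₂.mp (hS₀cov ht)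
      exact ⟨q, hq.1, by rw [← Real.dist_eq]; exact Metric.mem_ball.mp hq.2⟩
    have hqI : q ∈ Set.Icc (0:ℝ) T := hSsub (hS₀S hqS₀)
    have a1 := hineq t ht q hqI (ψ m)
    have a2 := hineq q hqI t ht (ψ j)
    rw [inner_sub_left] at a1 a2
    have amid := hN₁ (max N₁ N₂) (le_max_left _ _) q hqS₀ m hm j hj
    have hω1 : ω t q < ε/5 := hωη t ht q hqI hqt
    have hω2 : ω q t < ε/5 := hωη q hqI t ht (by rw [abs_sub_comm]; exact hqt)
    have hδm : δ (ψ m) < ε/5 := hN₂ m (le_trans (le_max_right _ _) hm)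
    have hδj : δ (ψ j) < ε/5 := hN₂ j (le_trans (le_max_right _ _) hj)
    have tri : (⟪v (ψ m) t, d⟫ : ℝ) - ⟪v (ψ j) t, d⟫ =
        ((⟪v (ψ m) t, d⟫ : ℝ) - ⟪v (ψ m) q, d⟫) + ((⟪v (ψ m) q, d⟫ : ℝ) - ⟪v (ψ j) q, d⟫)
          + ((⟪v (ψ j) q, d⟫ : ℝ) - ⟪v (ψ j) t, d⟫) := by ring
    calc |(⟪v (ψ m) t, d⟫ : ℝ) - ⟪v (ψ j) t, d⟫|
        = |((⟪v (ψ m) t, d⟫ : ℝ) - ⟪v (ψ m) q, d⟫) + ((⟪v (ψ m) q, d⟫ : ℝ) - ⟪v (ψ j) q, d⟫)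
            + ((⟪v (ψ j) q, d⟫ : ℝ) - ⟪v (ψ j) t, d⟫)| := by rw [tri]
      _ ≤ |(⟪v (ψ m) t, d⟫ : ℝ) - ⟪v (ψ m) q, d⟫| + |(⟪v (ψ m) q, d⟫ : ℝ) - ⟪v (ψ j) q, d⟫|
            + |(⟪v (ψ j) q, d⟫ : ℝ) - ⟪v (ψ j) t, d⟫| := abs_add_three _ _ _
      _ < ε := by
          have h1 : |(⟪v (ψ j) q, d⟫ : ℝ) - ⟪v (ψ j) t, d⟫| ≤ δ (ψ j) + ω q t := a2
          linarith
  -- uniform Cauchy estimate against every φ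
  have hUCall : ∀ φ : Lp ℝ 2 (volume.restrict A), ∀ ε > (0:ℝ), ∃ N : ℕ,
      ∀ m ≥ N, ∀ j ≥ N, ∀ t ∈ Set.Icc (0:ℝ) T,
      |(⟪v (ψ m) t, φ⟫ : ℝ) - ⟪v (ψ j) t, φ⟫| < ε := by
    intro φ ε hε
    have hpos : (0:ℝ) < 4*C+4 := by linarith
    obtain ⟨d, hdD, hdist⟩ := hDd.exists_dist_lt φ (div_pos hε hpos)
    have hnd : ‖φ - d‖ ≤ ε/(4*C+4) := by rw [dist_eq_norm] at hdist; linarith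
    have e1 : ε/(4*C+4) * (C+1) = ε/4 := by field_simp
    have e2 : C * (ε/(4*C+4)) ≤ ε/4 := by nlinarith [div_nonneg hε.le hpos.le]
    have hmul : C * ‖φ - d‖ ≤ ε/4 := (mul_le_mul_of_nonneg_left hnd hC0).trans e2
    obtain ⟨N, hN⟩ := hUC d hdD (ε/4) (by linarith)
    refine ⟨N, fun m hm j hj t ht => ?_⟩
    have h1 : |(⟪v (ψ m) t, φ⟫ : ℝ) - ⟪v (ψ m) t, d⟫| ≤ C * ‖φ - d‖ := by
      rw [← inner_sub_right]
      exact (abs_real_inner_le_norm _ _).trans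
        (mul_le_mul_of_nonneg_right (hC _ t ht) (norm_nonneg _))
    have h2 : |(⟪v (ψ j) t, d⟫ : ℝ) - ⟪v (ψ j) t, φ⟫| ≤ C * ‖φ - d‖ := by
      rw [abs_sub_comm, ← inner_sub_right]
      exact (abs_real_inner_le_norm _ _).trans
        (mul_le_mul_of_nonneg_right (hC _ t ht) (norm_nonneg _))
    have hmid := hN m hm j hj t ht
    have tri : (⟪v (ψ m) t, φ⟫ : ℝ) - ⟪v (ψ j) t, φ⟫ =
        ((⟪v (ψ m) t, φ⟫ : ℝ) - ⟪v (ψ m) t, d⟫) + ((⟪v (ψ m) t, d⟫ : ℝ) - ⟪v (ψ j) t, d⟫)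
          + ((⟪v (ψ j) t, d⟫ : ℝ) - ⟪v (ψ j) t, φ⟫) := by ring
    calc |(⟪v (ψ m) t, φ⟫ : ℝ) - ⟪v (ψ j) t, φ⟫|
        = |_ + _ + _| := by rw [tri]
      _ ≤ |(⟪v (ψ m) t, φ⟫ : ℝ) - ⟪v (ψ m) t, d⟫| + |(⟪v (ψ m) t, d⟫ : ℝ) - ⟪v (ψ j) t, d⟫|
            + |(⟪v (ψ j) t, d⟫ : ℝ) - ⟪v (ψ j) t, φ⟫| := abs_add_three _ _ _
      _ < ε := by linarith
  -- pointwise Cauchy, hence convergent; build the weak limit via Riesz representation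
  have hcauchy : ∀ t ∈ Set.Icc (0:ℝ) T, ∀ φ : Lp ℝ 2 (volume.restrict A),
      CauchySeq (fun m => (⟪v (ψ m) t, φ⟫ : ℝ)) := by
    intro t ht φ
    rw [Metric.cauchySeq_iff]
    intro ε hε
    obtain ⟨N, hN⟩ := hUCall φ ε hε
    exact ⟨N, fun m hm j hj => by rw [Real.dist_eq]; exact hN m hm j hj t ht⟩
  have hlim : ∀ t : ℝ, ∃ w : Lp ℝ 2 (volume.restrict A), t ∈ Set.Icc (0:ℝ) T →
      (∀ φ, Tendsto (fun m => (⟪v (ψ m) t, φ⟫ : ℝ)) atTop (𝓝 (⟪w, φ⟫ : ℝ))) ∧ ‖w‖ ≤ C := by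
    intro t
    by_cases ht : t ∈ Set.Icc (0:ℝ) T
    · set G : Lp ℝ 2 (volume.restrict A) → ℝ :=
        fun φ => limUnder atTop (fun m => (⟪v (ψ m) t, φ⟫ : ℝ)) with hGdef
      have hGt : ∀ φ, Tendsto (fun m => (⟪v (ψ m) t, φ⟫ : ℝ)) atTop (𝓝 (G φ)) :=
        fun φ => (hcauchy t ht φ).tendsto_limUnder
      have hGadd : ∀ x y, G (x + y) = G x + G y := by
        intro x y
        refine tendsto_nhds_unique (hGt (x + y)) ?_
        have h1 : Tendsto (fun m => (⟪v (ψ m) t, x⟫ : ℝ) + ⟪v (ψ m) t, y⟫) atTop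
            (𝓝 (G x + G y)) := (hGt x).add (hGt y)
        refine h1.congr fun m => ?_
        rw [← inner_add_right]
      have hGsmul : ∀ (c : ℝ) (x : Lp ℝ 2 (volume.restrict A)), G (c • x) = c * G x := by
        intro c x
        refine tendsto_nhds_unique (hGt (c • x)) ?_
        have h1 : Tendsto (fun m => c * (⟪v (ψ m) t, x⟫ : ℝ)) atTop (𝓝 (c * G x)) :=
          (hGt x).const_mul c
        refine h1.congr fun m => ?_
        rw [real_inner_smul_right]
      have hGbound : ∀ φ, ‖G φ‖ ≤ C * ‖φ‖ := by
        intro φ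
        have h1 : ∀ m : ℕ, |(⟪v (ψ m) t, φ⟫ : ℝ)| ≤ C * ‖φ‖ := fun m => hinner _ _ ht φ
        have h2 := le_of_tendsto' (hGt φ).abs h1
        rwa [Real.norm_eq_abs]
      refine ⟨(InnerProductSpace.toDual ℝ _).symm
        (LinearMap.mkContinuous ⟨⟨G, hGadd⟩, hGsmul⟩ C hGbound), fun _ => ⟨?_, ?_⟩⟩
      · intro φ
        have hre : (⟪(InnerProductSpace.toDual ℝ _).symm
            (LinearMap.mkContinuous ⟨⟨G, hGadd⟩, hGsmul⟩ C hGbound), φ⟫ : ℝ) = G φ := by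
          rw [InnerProductSpace.toDual_symm_apply]
          rfl
        rw [hre]
        exact hGt φ
      · rw [LinearIsometryEquiv.norm_map]
        exact LinearMap.mkContinuous_norm_le _ hC0 _
    · exact ⟨0, fun h => absurd h ht⟩
  choose vlim hvlim using hlim
  refine ⟨vlim, ψ, hψ, ?_, ?_⟩
  · intro φ
    have hUCφ : UniformCauchySeqOn (fun m t => (⟪v (ψ m) t, φ⟫ : ℝ)) atTop (Set.Icc 0 T) := by
      rw [Metric.uniformCauchySeqOn_iff]
      intro ε hε
      obtain ⟨N, hN⟩ := hUCall φ ε hε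
      exact ⟨N, fun m hm j hj t ht => by rw [Real.dist_eq]; exact hN m hm j hj t ht⟩
    exact hUCφ.tendstoUniformlyOn_of_tendsto fun t ht => (hvlim t ht).1 φ
  · intro φ t₀ ht₀
    rw [Metric.continuousWithinAt_iff]
    intro ε hε
    have hpos : (0:ℝ) < 8*C+8 := by linarith
    obtain ⟨d, hd𝓡, hdist⟩ := h𝓡.exists_dist_lt φ (div_pos hε hpos)
    have hnd : ‖φ - d‖ ≤ ε/(8*C+8) := by rw [dist_eq_norm] at hdist; linarith
    have e1 : ε/(8*C+8) * (C+1) = ε/8 := by field_simp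
    have e2 : C * (ε/(8*C+8)) ≤ ε/8 := by nlinarith [div_nonneg hε.le hpos.le]
    have hmul : C * ‖φ - d‖ ≤ ε/8 := (mul_le_mul_of_nonneg_left hnd hC0).trans e2
    obtain ⟨ω, δ, hω0, hδ0, hωcont, hδlim, hineq⟩ := hequi d hd𝓡
    obtain ⟨η, hη, hωη⟩ := hωcont (ε/4) (by linarith)
    refine ⟨η, hη, fun s hs hst => ?_⟩
    have hkey : |(⟪vlim s, d⟫ : ℝ) - ⟪vlim t₀, d⟫| ≤ ω s t₀ := by
      have h1 : Tendsto (fun m => |(⟪v (ψ m) s, d⟫ : ℝ) - ⟪v (ψ m) t₀, d⟫|) atTop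
          (𝓝 |(⟪vlim s, d⟫ : ℝ) - ⟪vlim t₀, d⟫|) :=
        (((hvlim s hs).1 d).sub ((hvlim t₀ ht₀).1 d)).abs
      have h2 : Tendsto (fun m => δ (ψ m) + ω s t₀) atTop (𝓝 (0 + ω s t₀)) :=
        (hδlim.comp hψ.tendsto_atTop).add tendsto_const_nhds
      rw [zero_add] at h2
      refine le_of_tendsto_of_tendsto' h1 h2 fun m => ?_
      have h3 := hineq s hs t₀ ht₀ (ψ m)
      rwa [inner_sub_left] at h3
    have hb1 : |(⟪vlim s, φ⟫ : ℝ) - ⟪vlim s, d⟫| ≤ C * ‖φ - d‖ := by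
      rw [← inner_sub_right]
      exact (abs_real_inner_le_norm _ _).trans
        (mul_le_mul_of_nonneg_right (hvlim s hs).2 (norm_nonneg _))
    have hb2 : |(⟪vlim t₀, d⟫ : ℝ) - ⟪vlim t₀, φ⟫| ≤ C * ‖φ - d‖ := by
      rw [abs_sub_comm, ← inner_sub_right]
      exact (abs_real_inner_le_norm _ _).trans
        (mul_le_mul_of_nonneg_right (hvlim t₀ ht₀).2 (norm_nonneg _))
    have hω' : ω s t₀ < ε/4 := hωη s hs t₀ ht₀ (by rw [← Real.dist_eq]; exact hst)
    rw [Real.dist_eq]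
    have tri : (⟪vlim s, φ⟫ : ℝ) - ⟪vlim t₀, φ⟫ =
        ((⟪vlim s, φ⟫ : ℝ) - ⟪vlim s, d⟫) + ((⟪vlim s, d⟫ : ℝ) - ⟪vlim t₀, d⟫)
          + ((⟪vlim t₀, d⟫ : ℝ) - ⟪vlim t₀, φ⟫) := by ring
    calc |(⟪vlim s, φ⟫ : ℝ) - ⟪vlim t₀, φ⟫|
        = |_ + _ + _| := by rw [tri]
      _ ≤ |(⟪vlim s, φ⟫ : ℝ) - ⟪vlim s, d⟫| + |(⟪vlim s, d⟫ : ℝ) - ⟪vlim t₀, d⟫|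
            + |(⟪vlim t₀, d⟫ : ℝ) - ⟪vlim t₀, φ⟫| := abs_add_three _ _ _
      _ < ε := by linarith
end

section
/- Let P ⊆ ℝᵈ be the convex hull of a finite set of points (a polytope). Then there exists a constant C ≥ 0, depending only on P, such that for every ξ ∈ ℝᵈ, the Lebesgue measure of the set {x ∈ P : x + ξ ∉ P} is at most C·‖ξ‖. -/
open MeasureTheory Pointwise

/-- For a polytope `P ⊆ ℝᵈ` (the convex hull of a finite set of points), there exists a
constant `C ≥ 0`, depending only on `P`, such that for every translation vector `ξ`, the
Lebesgue measure of `{x ∈ P : x + ξ ∉ P}` is at most `C·‖ξ‖`. -/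
theorem polytope_translate_measure_estimate
    {d : ℕ} (s : Finset (EuclideanSpace ℝ (Fin d)))
    (P : Set (EuclideanSpace ℝ (Fin d)))
    (hP : P = convexHull ℝ (s : Set (EuclideanSpace ℝ (Fin d)))) :
    ∃ C : ℝ, 0 ≤ C ∧ ∀ ξ : EuclideanSpace ℝ (Fin d),
      volume {x ∈ P | x + ξ ∉ P} ≤ ENNReal.ofReal (C * ‖ξ‖) := by
  have hconv : Convex ℝ P := hP ▸ convex_convexHull ℝ _
  have hcomp : IsCompact P := hP ▸ s.finite_toSet.isCompact_convexHull ℝ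
  have hPfin : volume P < ⊤ := hcomp.measure_lt_top
  by_cases hint : (interior P).Nonempty
  · obtain ⟨c, hc⟩ := hint
    obtain ⟨ρ, hρ, hball⟩ := Metric.isOpen_iff.1 isOpen_interior c hc
    have hcP : c ∈ P := interior_subset hc
    have hcb : Metric.closedBall c ρ ⊆ P := by
      rw [← closure_ball c hρ.ne']
      exact closure_minimal (hball.trans interior_subset) hcomp.isClosed
    set v := (volume P).toReal with hv
    have hv0 : 0 ≤ v := ENNReal.toReal_nonneg
    have hvol : volume P = ENNReal.ofReal v := (ENNReal.ofReal_toReal hPfin.ne).symm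
    refine ⟨(d + 1) * v / ρ, by positivity, fun ξ => ?_⟩
    rcases eq_or_ne ξ 0 with rfl | hξ0
    · have he : {x ∈ P | x + (0 : EuclideanSpace ℝ (Fin d)) ∉ P} = ∅ := by
        ext x; simp
      rw [he]; simp
    have hξpos : 0 < ‖ξ‖ := norm_pos_iff.2 hξ0
    rcases le_or_gt ‖ξ‖ ρ with hle | hlt
    · -- main case: small translation
      set t := ‖ξ‖ / ρ with ht
      have ht0 : 0 < t := div_pos hξpos hρ
      have ht1 : t ≤ 1 := (div_le_one hρ).2 hle
      set Q : Set (EuclideanSpace ℝ (Fin d)) := (t • c) +ᵥ ((1 - t) • P) with hQ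
      have hQmem : ∀ x, x ∈ Q ↔ ∃ y ∈ P, t • c + (1 - t) • y = x := by
        intro x
        simp only [hQ, Set.mem_vadd_set, Set.mem_smul_set]
        constructor
        · rintro ⟨z, ⟨y, hy, rfl⟩, rfl⟩
          exact ⟨y, hy, by rw [vadd_eq_add]⟩
        · rintro ⟨y, hy, rfl⟩
          exact ⟨(1 - t) • y, ⟨y, hy, rfl⟩, by rw [vadd_eq_add]⟩
      have hQP : Q ⊆ P := by
        intro x hx
        obtain ⟨y, hy, rfl⟩ := (hQmem x).1 hx
        have := hconv (a := 1 - t) (b := t) hy hcP (by linarith) ht0.le (by ring)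
        rw [add_comm] at this
        exact this
      have hQtrans : ∀ x ∈ Q, x + ξ ∈ P := by
        intro x hx
        obtain ⟨y, hy, rfl⟩ := (hQmem x).1 hx
        have hmem : c + t⁻¹ • ξ ∈ Metric.closedBall c ρ := by
          rw [Metric.mem_closedBall, dist_eq_norm]
          have : c + t⁻¹ • ξ - c = t⁻¹ • ξ := by abel
          rw [this, norm_smul, norm_inv, Real.norm_eq_abs, abs_of_pos ht0, ht]
          have heq : (‖ξ‖ / ρ)⁻¹ * ‖ξ‖ = ρ := by field_simp
          rw [heq]
        have hcomb := hconv (a := 1 - t) (b := t) hy (hcb hmem) (by linarith) ht0.le (by ring)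
        have hrw : (1 - t) • y + t • (c + t⁻¹ • ξ) = t • c + (1 - t) • y + ξ := by
          rw [smul_add, smul_smul, mul_inv_cancel₀ ht0.ne', one_smul]
          abel
        rwa [hrw] at hcomb
      have hsub : {x ∈ P | x + ξ ∉ P} ⊆ P \ Q := by
        rintro x ⟨hxP, hxξ⟩
        exact ⟨hxP, fun hxQ => hxξ (hQtrans x hxQ)⟩
      have hQcomp : IsCompact Q := by
        have h1 : IsCompact ((1 - t) • P) := hcomp.smul (1 - t)
        rw [hQ, ← Set.image_vadd]
        exact h1.image (continuous_const_vadd _)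
      have hQvol : volume Q = ENNReal.ofReal ((1 - t) ^ d) * volume P := by
        rw [hQ, measure_vadd, Measure.addHaar_smul_of_nonneg volume (by linarith : (0:ℝ) ≤ 1 - t),
          finrank_euclideanSpace_fin]
      have hdiff : volume (P \ Q) = volume P - volume Q :=
        measure_diff hQP hQcomp.isClosed.measurableSet.nullMeasurableSet
          ((measure_mono hQP).trans_lt hPfin).ne
      calc volume {x ∈ P | x + ξ ∉ P} ≤ volume (P \ Q) := measure_mono hsub
        _ = volume P - volume Q := hdiff
        _ ≤ ENNReal.ofReal ((d + 1) * v / ρ * ‖ξ‖) := by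
            have h1t : (0:ℝ) ≤ 1 - t := by linarith
            rw [hQvol, hvol, ← ENNReal.ofReal_mul (pow_nonneg h1t d)]
            rw [tsub_le_iff_right, ← ENNReal.ofReal_add (by positivity)
              (mul_nonneg (pow_nonneg h1t d) hv0)]
            apply ENNReal.ofReal_le_ofReal
            have hB : 1 - (d : ℝ) * t ≤ (1 - t) ^ d := by
              have := one_add_mul_le_pow (a := -t) (by linarith) d
              rw [show (1:ℝ) + -t = 1 - t by ring] at this; linarith
            have htρ : ‖ξ‖ = t * ρ := by rw [ht, div_mul_cancel₀ _ hρ.ne']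
            rw [htρ]
            have h2 : ((d : ℝ) + 1) * v / ρ * (t * ρ) = (d + 1) * v * t := by
              field_simp
            rw [h2]
            nlinarith [mul_le_mul_of_nonneg_right hB hv0, mul_nonneg hv0 ht0.le]
    · -- large translation
      calc volume {x ∈ P | x + ξ ∉ P} ≤ volume P := measure_mono fun x hx => hx.1
        _ = ENNReal.ofReal v := hvol
        _ ≤ ENNReal.ofReal ((d + 1) * v / ρ * ‖ξ‖) := by
            apply ENNReal.ofReal_le_ofReal
            have h1 : v ≤ (d + 1) * v := by nlinarith [Nat.cast_nonneg (α := ℝ) d]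
            have h2 : ((d : ℝ) + 1) * v = (d + 1) * v / ρ * ρ := by field_simp
            have h3 : ((d : ℝ) + 1) * v / ρ * ρ ≤ (d + 1) * v / ρ * ‖ξ‖ :=
              mul_le_mul_of_nonneg_left hlt.le (by positivity)
            linarith
  · -- degenerate case: empty interior
    refine ⟨0, le_refl 0, fun ξ => ?_⟩
    have hPzero : volume P = 0 := by
      have hfr : frontier P = P := by
        rw [frontier, hcomp.isClosed.closure_eq,
          Set.not_nonempty_iff_eq_empty.1 hint, Set.diff_empty]
      calc volume P = volume (frontier P) := by rw [hfr]
        _ = 0 := hconv.addHaar_frontier volume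
    calc volume {x ∈ P | x + ξ ∉ P} ≤ volume P := measure_mono fun x hx => hx.1
      _ = 0 := hPzero
      _ ≤ _ := zero_le
end
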